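/- arXiv:1009.4408 — 5 statements merged into one kernel-verified Lean document; each statement's English description precedes it below -/
import Mathlib

section
/- For every integer m ≥ 1, the product ∏_{j=1}^m (j - 1/2) is greater than (m/e)^m. -/
open Finset Stirling Real

lemma prod_eq_fact (m : ℕ) : ∏ j ∈ Finset.Icc 1 m, ((j : ℝ) - 1 / 2)
    = (Nat.factorial (2*m) : ℝ) / (2^(2*m) * Nat.factorial m) := by
  induction m with
  | zero => simp
  | succ n ih =>
    rw [← Finset.insert_Icc_right_eq_Icc_add_one (by omega), Finset.prod_insert (by simp), ih]
    have h1 : 2 * (n+1) = (2*n+1) + 1 := by ring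
    rw [h1, Nat.factorial_succ, Nat.factorial_succ, Nat.factorial_succ]
    have h2 : (Nat.factorial n : ℝ) ≠ 0 := by positivity
    push_cast
    field_simp
    ring

lemma sqrt_pi_le_stirling (n : ℕ) : Real.sqrt Real.pi ≤ stirlingSeq (n+1) := by
  have ht : Filter.Tendsto (stirlingSeq ∘ Nat.succ) Filter.atTop (nhds (Real.sqrt Real.pi)) := by
    rw [show (stirlingSeq ∘ Nat.succ) = fun n => stirlingSeq (n+1) from rfl]
    exact (Filter.tendsto_add_atTop_iff_nat 1).mpr tendsto_stirlingSeq_sqrt_pi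
  exact stirlingSeq'_antitone.le_of_tendsto ht n

lemma fact_eq_stirling (n : ℕ) (hn : 1 ≤ n) :
    (Nat.factorial n : ℝ) = stirlingSeq n * (Real.sqrt (2*n) * ((n:ℝ)/Real.exp 1)^n) := by
  have hn' : (0:ℝ) < n := by exact_mod_cast hn
  rw [stirlingSeq]
  rw [div_mul_cancel₀]
  positivity

theorem halfint_product_gt (m : ℕ) (hm : 1 ≤ m) :
    ∏ j ∈ Finset.Icc 1 m, ((j : ℝ) - 1 / 2) > ((m : ℝ) / Real.exp 1) ^ m := by
  have hm' : (0:ℝ) < m := by exact_mod_cast hm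
  set c : ℝ := (m:ℝ) / Real.exp 1 with hcdef
  have hc : 0 < c := by positivity
  rw [prod_eq_fact]
  have hB0 : (0:ℝ) < 2^(2*m) * Nat.factorial m := by positivity
  rw [gt_iff_lt, lt_div_iff₀ hB0]
  -- upper bound on m!
  have hstir_ub : stirlingSeq m ≤ Real.exp 1 / Real.sqrt 2 := by
    rw [← stirlingSeq_one]
    obtain ⟨k, rfl⟩ := Nat.exists_eq_add_of_le' hm
    exact stirlingSeq'_antitone (Nat.zero_le k)
  have hub : (Nat.factorial m : ℝ) ≤ (Real.exp 1 / Real.sqrt 2) * (Real.sqrt (2*m) * c^m) := by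
    rw [fact_eq_stirling m hm]
    have h : 0 ≤ Real.sqrt (2*(m:ℝ)) * c^m := by positivity
    exact mul_le_mul_of_nonneg_right hstir_ub h
  -- lower bound on (2m)!
  have h2m : 1 ≤ 2*m := by omega
  have hstir_lb : Real.sqrt Real.pi ≤ stirlingSeq (2*m) := by
    have h := sqrt_pi_le_stirling (2*m-1)
    rwa [show 2*m-1+1 = 2*m by omega] at h
  have hlb : Real.sqrt Real.pi * (Real.sqrt (2*(2*(m:ℝ))) * ((2*(m:ℝ))/Real.exp 1)^(2*m))
      ≤ (Nat.factorial (2*m) : ℝ) := by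
    rw [fact_eq_stirling (2*m) h2m]
    push_cast
    have h : 0 ≤ Real.sqrt (2*(2*(m:ℝ))) * ((2*(m:ℝ))/Real.exp 1)^(2*m) := by positivity
    exact mul_le_mul_of_nonneg_right hstir_lb h
  -- key strict inequality between the bounds
  have hQ : (0:ℝ) < 2^(2*m) * Real.sqrt (2*(m:ℝ)) * (c^m * c^m) := by positivity
  have hlt : Real.exp 1 / Real.sqrt 2 < Real.sqrt Real.pi * Real.sqrt 2 := by
    rw [div_lt_iff₀ (by positivity : (0:ℝ) < Real.sqrt 2), mul_assoc,
      Real.mul_self_sqrt (by norm_num : (0:ℝ) ≤ 2)]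
    have h3 : (1.7:ℝ) < Real.sqrt Real.pi := by
      rw [show (1.7:ℝ) = Real.sqrt (1.7^2) from (Real.sqrt_sq (by norm_num)).symm]
      exact Real.sqrt_lt_sqrt (by norm_num) (by nlinarith [Real.pi_gt_three])
    nlinarith [Real.exp_one_lt_d9]
  have hs4 : Real.sqrt (2*(2*(m:ℝ))) = Real.sqrt 2 * Real.sqrt (2*(m:ℝ)) := by
    rw [← Real.sqrt_mul (by norm_num : (0:ℝ) ≤ 2)]
  have hpow : ((2*(m:ℝ))/Real.exp 1)^(2*m) = 2^(2*m) * (c^m * c^m) := by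
    rw [show (2*(m:ℝ))/Real.exp 1 = 2 * c from by rw [hcdef]; ring,
      mul_pow, two_mul m, pow_add, pow_add]
  have hkey : c^m * (2^(2*m) * ((Real.exp 1 / Real.sqrt 2) * (Real.sqrt (2*(m:ℝ)) * c^m)))
      < Real.sqrt Real.pi * (Real.sqrt (2*(2*(m:ℝ))) * ((2*(m:ℝ))/Real.exp 1)^(2*m)) := by
    rw [hs4, hpow]
    have h := mul_lt_mul_of_pos_right hlt hQ
    calc c^m * (2^(2*m) * ((Real.exp 1 / Real.sqrt 2) * (Real.sqrt (2*(m:ℝ)) * c^m)))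
        = (Real.exp 1 / Real.sqrt 2) * (2^(2*m) * Real.sqrt (2*(m:ℝ)) * (c^m * c^m)) := by ring
      _ < (Real.sqrt Real.pi * Real.sqrt 2) * (2^(2*m) * Real.sqrt (2*(m:ℝ)) * (c^m * c^m)) := h
      _ = Real.sqrt Real.pi * (Real.sqrt 2 * Real.sqrt (2*(m:ℝ)) * (2^(2*m) * (c^m * c^m))) := by
          ring
  calc c^m * (2^(2*m) * (Nat.factorial m : ℝ))
      ≤ c^m * (2^(2*m) * ((Real.exp 1 / Real.sqrt 2) * (Real.sqrt (2*(m:ℝ)) * c^m))) := by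
        apply mul_le_mul_of_nonneg_left _ (by positivity)
        exact mul_le_mul_of_nonneg_left hub (by positivity)
    _ < Real.sqrt Real.pi * (Real.sqrt (2*(2*(m:ℝ))) * ((2*(m:ℝ))/Real.exp 1)^(2*m)) := hkey
    _ ≤ (Nat.factorial (2*m) : ℝ) := hlb
end

section
/- Let α be a real number, and let k, x, y be integers with k ≥ 1 and x ≤ y. Let (kα) denote the nearest integer to kα. If (kα) ∉ [x,y], then ∏_{j=x}^{y} |j - kα| ≥ (1/2) ((y-x)/e)^{y-x}. -/
lemma fact_ge_pow_div_exp (n : ℕ) :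
    ((n : ℝ) / Real.exp 1) ^ n ≤ (n.factorial : ℝ) := by
  have h := Real.pow_div_factorial_le_exp (x := (n : ℝ)) (by positivity) n
  have hexp : Real.exp (n : ℝ) = Real.exp 1 ^ n := by
    rw [← Real.exp_nat_mul]; ring_nf
  have hfact : (0 : ℝ) < n.factorial := by exact_mod_cast n.factorial_pos
  have hepos : (0 : ℝ) < Real.exp 1 ^ n := by positivity
  rw [div_pow, div_le_iff₀ hepos]
  rw [div_le_iff₀ hfact, hexp] at h
  linarith [h]

lemma half_fact_le_prod (n : ℕ) :
    (1 / 2 : ℝ) * n.factorial ≤ ∏ i ∈ Finset.range (n + 1), ((i : ℝ) + 1 / 2) := by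
  rw [Finset.prod_range_succ']
  push_cast
  have h1 : (n.factorial : ℝ) ≤ ∏ i ∈ Finset.range n, ((i : ℝ) + 1 + 1 / 2) := by
    rw [← Finset.prod_range_add_one_eq_factorial]
    push_cast
    exact Finset.prod_le_prod (fun i _ => by positivity) (fun i _ => by norm_num)
  have h2 := mul_le_mul_of_nonneg_right h1 (by norm_num : (0:ℝ) ≤ 1/2)
  linarith

lemma prod_Icc_int (x y : ℤ) (hxy : x ≤ y) (f : ℤ → ℝ) :
    ∏ j ∈ Finset.Icc x y, f j = ∏ i ∈ Finset.range ((y - x).toNat + 1), f (x + i) := by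
  refine Finset.prod_nbij' (fun j => (j - x).toNat) (fun i => x + (i : ℤ)) ?_ ?_ ?_ ?_ ?_
  · intro j hj; simp only [Finset.mem_Icc] at hj; simp only [Finset.mem_range]; omega
  · intro i hi; simp only [Finset.mem_range] at hi; simp only [Finset.mem_Icc]; omega
  · intro j hj; simp only [Finset.mem_Icc] at hj; omega
  · intro i hi; simp only [Finset.mem_range] at hi; omega
  · intro j hj; simp only [Finset.mem_Icc] at hj; congr 1; omega

theorem prod_abs_sub_mul_ge_of_round_not_mem (α : ℝ) (hα : Irrational α)
    (k x y : ℤ) (hk : 1 ≤ k) (hxy : x ≤ y)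
    (h : round ((k : ℝ) * α) ∉ Set.Icc x y) :
    ∏ j ∈ Finset.Icc x y, |(j : ℝ) - (k : ℝ) * α| ≥
      (1 / 2) * (((y - x : ℤ) : ℝ) / Real.exp 1) ^ (y - x).toNat := by
  set t : ℝ := (k : ℝ) * α with ht
  set n : ℕ := (y - x).toNat with hn
  have hcast : ((y - x : ℤ) : ℝ) = (n : ℝ) := by
    have : (y - x : ℤ) = (n : ℤ) := by omega
    exact_mod_cast this
  have hrhs : (1 / 2 : ℝ) * (((y - x : ℤ) : ℝ) / Real.exp 1) ^ n ≤ (1 / 2 : ℝ) * n.factorial := by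
    rw [hcast]
    have := fact_ge_pow_div_exp n
    linarith
  simp only [Set.mem_Icc, not_and_or, not_le] at h
  have key : (1 / 2 : ℝ) * n.factorial ≤ ∏ j ∈ Finset.Icc x y, |(j : ℝ) - t| := by
    rcases h with h1 | h2
    · -- round t < x, so t < x - 1/2
      have hlt : t < (x : ℝ) - 1 / 2 := by
        have h' := sub_half_lt_round t
        have : ((round t : ℤ) : ℝ) ≤ ((x : ℤ) : ℝ) - 1 := by exact_mod_cast (by omega : round t ≤ x - 1)
        linarith
      have hstep : ∏ j ∈ Finset.Icc x y, ((j : ℝ) - (x : ℝ) + 1 / 2) ≤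
          ∏ j ∈ Finset.Icc x y, |(j : ℝ) - t| := by
        refine Finset.prod_le_prod (fun j hj => ?_) (fun j hj => ?_)
        · simp only [Finset.mem_Icc] at hj
          have : ((x : ℝ)) ≤ (j : ℝ) := by exact_mod_cast hj.1
          linarith
        · simp only [Finset.mem_Icc] at hj
          have hxj : ((x : ℝ)) ≤ (j : ℝ) := by exact_mod_cast hj.1
          have : (j : ℝ) - t > (j : ℝ) - (x : ℝ) + 1 / 2 := by linarith
          rw [abs_of_pos (by linarith)]
          linarith
      have hval : ∏ j ∈ Finset.Icc x y, ((j : ℝ) - (x : ℝ) + 1 / 2) =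
          ∏ i ∈ Finset.range (n + 1), ((i : ℝ) + 1 / 2) := by
        rw [prod_Icc_int x y hxy]
        refine Finset.prod_congr rfl (fun i _ => ?_)
        push_cast; ring
      calc (1 / 2 : ℝ) * n.factorial ≤ ∏ i ∈ Finset.range (n + 1), ((i : ℝ) + 1 / 2) :=
            half_fact_le_prod n
        _ = ∏ j ∈ Finset.Icc x y, ((j : ℝ) - (x : ℝ) + 1 / 2) := hval.symm
        _ ≤ _ := hstep
    · -- round t > y, so t > y + 1/2
      have hlt : (y : ℝ) + 1 / 2 < t := by
        have h' := round_le_add_half t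
        have hr : ((y : ℤ) : ℝ) + 1 ≤ ((round t : ℤ) : ℝ) := by
          exact_mod_cast (by omega : y + 1 ≤ round t)
        have hne : t ≠ (y : ℝ) + 1 / 2 := by
          intro heq
          have : Irrational t := hα.intCast_mul (by omega)
          rw [heq] at this
          exact this ⟨(y : ℚ) + 1 / 2, by push_cast; ring⟩
        have : (y : ℝ) + 1 / 2 ≤ t := by linarith
        exact lt_of_le_of_ne this (Ne.symm hne)
      have hstep : ∏ j ∈ Finset.Icc x y, ((y : ℝ) - (j : ℝ) + 1 / 2) ≤
          ∏ j ∈ Finset.Icc x y, |(j : ℝ) - t| := by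
        refine Finset.prod_le_prod (fun j hj => ?_) (fun j hj => ?_)
        · simp only [Finset.mem_Icc] at hj
          have : (j : ℝ) ≤ (y : ℝ) := by exact_mod_cast hj.2
          linarith
        · simp only [Finset.mem_Icc] at hj
          have hjy : (j : ℝ) ≤ (y : ℝ) := by exact_mod_cast hj.2
          have hpos : t - (j : ℝ) > 0 := by linarith
          rw [abs_of_neg (by linarith : (j : ℝ) - t < 0)]
          linarith
      have hval : ∏ j ∈ Finset.Icc x y, ((y : ℝ) - (j : ℝ) + 1 / 2) =
          ∏ i ∈ Finset.range (n + 1), ((i : ℝ) + 1 / 2) := by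
        rw [prod_Icc_int x y hxy]
        rw [← Finset.prod_range_reflect (fun i => ((i : ℝ) + 1 / 2)) (n + 1)]
        refine Finset.prod_congr rfl (fun i hi => ?_)
        simp only [Finset.mem_range] at hi
        have h1 : ((y : ℝ)) - ((x : ℝ) + (i : ℝ)) + 1 / 2 = ((n - i : ℕ) : ℝ) + 1 / 2 := by
          have : (y - x - i : ℤ) = ((n - i : ℕ) : ℤ) := by omega
          have h2 : ((y - x - i : ℤ) : ℝ) = ((n - i : ℕ) : ℝ) := by exact_mod_cast this
          push_cast at h2 ⊢
          linarith
        simp only [Nat.add_sub_cancel]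
        push_cast at h1 ⊢
        linarith
      calc (1 / 2 : ℝ) * n.factorial ≤ ∏ i ∈ Finset.range (n + 1), ((i : ℝ) + 1 / 2) :=
            half_fact_le_prod n
        _ = ∏ j ∈ Finset.Icc x y, ((y : ℝ) - (j : ℝ) + 1 / 2) := hval.symm
        _ ≤ _ := hstep
  calc (1 / 2 : ℝ) * (((y - x : ℤ) : ℝ) / Real.exp 1) ^ n ≤ (1 / 2 : ℝ) * n.factorial := hrhs
    _ ≤ _ := key
end

section
/- Let α be an irrational real number, and let k, x, y be integers with k ≥ 1 and x ≤ y. Let (kα) denote the nearest integer to kα. If x ≤ (kα) ≤ y, then ∏_{j=x}^{y} |j - kα| ≥ ((y-x)/(2e))^{y-x} · dist(kα, ℤ). -/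
open Real Finset

set_option maxHeartbeats 1000000 in
lemma stirling_ge (n : ℕ) : Real.sqrt π ≤ Stirling.stirlingSeq (n+1) :=
  Stirling.stirlingSeq'_antitone.le_of_tendsto
    (Stirling.tendsto_stirlingSeq_sqrt_pi.comp (Filter.tendsto_add_atTop_nat 1)) n

lemma fact_lower (n : ℕ) :
    Real.sqrt π * (Real.sqrt (2*n) * ((n:ℝ)/Real.exp 1)^n) ≤ n.factorial := by
  cases n with
  | zero => simp
  | succ m =>
    have h := stirling_ge m
    rw [Stirling.stirlingSeq, le_div_iff₀ (by positivity)] at h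
    linarith [h]

lemma fact_upper (n : ℕ) (hn : 1 ≤ n) :
    (n.factorial : ℝ) ≤ (Real.exp 1 / Real.sqrt 2) * (Real.sqrt (2*n) * ((n:ℝ)/Real.exp 1)^n) := by
  obtain ⟨m, rfl⟩ := Nat.exists_eq_add_of_le hn
  have h : Stirling.stirlingSeq (m+1) ≤ Stirling.stirlingSeq (0+1) :=
    Stirling.stirlingSeq'_antitone (Nat.zero_le m)
  rw [zero_add, Stirling.stirlingSeq_one] at h
  rw [Stirling.stirlingSeq, div_le_iff₀ (by positivity)] at h
  have : 1 + m = m + 1 := by omega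
  rw [this]
  linarith [h]

lemma prod_half_eq (a : ℕ) :
    ∏ i ∈ range a, ((i:ℝ)+1/2) = (2*a).factorial / (4^a * a.factorial) := by
  induction a with
  | zero => simp
  | succ n ih =>
    rw [prod_range_succ, ih]
    have h2 : 2*(n+1) = (2*n+1)+1 := by ring
    rw [h2, Nat.factorial_succ, Nat.factorial_succ, Nat.factorial_succ]
    have h1 : (n.factorial : ℝ) ≠ 0 := by positivity
    push_cast
    field_simp
    ring

set_option maxHeartbeats 1000000 in
lemma prod_half_ge (a : ℕ) :
    ((a:ℝ)/Real.exp 1)^a ≤ ∏ i ∈ range a, ((i:ℝ)+1/2) := by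
  rcases Nat.eq_zero_or_pos a with rfl|ha
  · simp
  rw [prod_half_eq, le_div_iff₀ (by positivity)]
  set A := ((a:ℝ)/Real.exp 1)^a with hA
  have hA0 : 0 ≤ A := by positivity
  have h1 : (a.factorial : ℝ) ≤ (Real.exp 1 / Real.sqrt 2) * (Real.sqrt (2*a) * A) :=
    fact_upper a ha
  have h2 := fact_lower (2*a)
  push_cast at h2
  have hkey : ((2*(a:ℝ))/Real.exp 1)^(2*a) = 4^a * (A*A) := by
    rw [pow_mul]
    have : ((2*(a:ℝ))/Real.exp 1)^2 = 4 * (((a:ℝ)/Real.exp 1)^2) := by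
      rw [div_pow, div_pow]; ring
    rw [this, mul_pow, ← pow_mul, two_mul, pow_add, hA]
  have hsqrt : Real.sqrt (2*(2*(a:ℝ))) = Real.sqrt 2 * Real.sqrt (2*(a:ℝ)) :=
    Real.sqrt_mul (by norm_num) _
  rw [hkey, hsqrt] at h2
  have he : Real.exp 1 ≤ 2 * Real.sqrt π := by
    have h3 : (1.77:ℝ) ≤ Real.sqrt π := by
      rw [show (1.77:ℝ) = Real.sqrt (1.77^2) by rw [Real.sqrt_sq]; norm_num]
      exact Real.sqrt_le_sqrt (by nlinarith [Real.pi_gt_d6])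
    nlinarith [Real.exp_one_lt_d9]
  have hs2 : Real.sqrt 2 * Real.sqrt 2 = 2 := Real.mul_self_sqrt (by norm_num)
  have hs2' : (0:ℝ) < Real.sqrt 2 := by positivity
  have hsa : (0:ℝ) ≤ Real.sqrt (2*a) := Real.sqrt_nonneg _
  have h4 : (0:ℝ) < (4:ℝ)^a := by positivity
  calc A * (4^a * (a.factorial:ℝ))
      ≤ A * (4^a * ((Real.exp 1 / Real.sqrt 2) * (Real.sqrt (2*a) * A))) := by
        apply mul_le_mul_of_nonneg_left _ hA0
        exact mul_le_mul_of_nonneg_left h1 (le_of_lt h4)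
    _ ≤ Real.sqrt π * (Real.sqrt 2 * Real.sqrt (2*a) * (4^a * (A*A))) := by
        have hfac : (0:ℝ) ≤ Real.sqrt (2*(a:ℝ)) * 4^a * (A*A) := by positivity
        have hcmp : Real.exp 1 / Real.sqrt 2 ≤ Real.sqrt π * Real.sqrt 2 := by
          rw [div_le_iff₀ hs2']
          nlinarith [he, hs2, Real.sqrt_nonneg π]
        calc A * (4^a * ((Real.exp 1 / Real.sqrt 2) * (Real.sqrt (2*(a:ℝ)) * A)))
            = (Real.exp 1 / Real.sqrt 2) * (Real.sqrt (2*(a:ℝ)) * 4^a * (A*A)) := by ring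
          _ ≤ (Real.sqrt π * Real.sqrt 2) * (Real.sqrt (2*(a:ℝ)) * 4^a * (A*A)) :=
              mul_le_mul_of_nonneg_right hcmp hfac
          _ = Real.sqrt π * (Real.sqrt 2 * Real.sqrt (2*(a:ℝ)) * (4^a * (A*A))) := by ring
    _ ≤ ((2*a).factorial : ℝ) := h2

lemma pow_gm (a b : ℕ) (ha : 0 < a) (hb : 0 < b) :
    ((a:ℝ)+b)^(a+b) ≤ (2*(a:ℝ))^a * (2*(b:ℝ))^b := by
  set m : ℝ := (a:ℝ) + b with hm'
  have ha' : (0:ℝ) < a := by exact_mod_cast ha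
  have hb' : (0:ℝ) < b := by exact_mod_cast hb
  have hm : 0 < m := by positivity
  have hp₁ : (0:ℝ) < m/(2*a) := by positivity
  have hp₂ : (0:ℝ) < m/(2*b) := by positivity
  have h := Real.geom_mean_le_arith_mean2_weighted (by positivity : (0:ℝ) ≤ (a:ℝ)/m)
    (by positivity : (0:ℝ) ≤ (b:ℝ)/m) hp₁.le hp₂.le (by field_simp; exact hm'.symm)
  have hsum : (a:ℝ)/m * (m/(2*a)) + (b:ℝ)/m * (m/(2*b)) = 1 := by field_simp; ring
  rw [hsum] at h
  have h2 := Real.rpow_le_rpow (by positivity) h hm.le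
  rw [Real.one_rpow, Real.mul_rpow (Real.rpow_nonneg hp₁.le _) (Real.rpow_nonneg hp₂.le _),
    ← Real.rpow_mul hp₁.le, ← Real.rpow_mul hp₂.le,
    div_mul_cancel₀ _ hm.ne', div_mul_cancel₀ _ hm.ne',
    Real.rpow_natCast, Real.rpow_natCast] at h2
  rw [div_pow, div_pow, div_mul_div_comm, div_le_one (by positivity), ← pow_add] at h2
  exact h2

lemma gm_bound (a b : ℕ) :
    (((a:ℝ)+b)/(2*Real.exp 1))^(a+b) ≤ ((a:ℝ)/Real.exp 1)^a * ((b:ℝ)/Real.exp 1)^b := by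
  have e1 : (0:ℝ) < Real.exp 1 := Real.exp_pos 1
  rcases Nat.eq_zero_or_pos a with rfl|ha
  · simp only [Nat.cast_zero, zero_add, zero_add, pow_zero, one_mul]
    apply pow_le_pow_left₀ (by positivity)
    rw [div_le_div_iff₀ (by positivity) (by positivity)]
    nlinarith [Nat.cast_nonneg (α := ℝ) b]
  rcases Nat.eq_zero_or_pos b with rfl|hb
  · simp only [Nat.cast_zero, add_zero, pow_zero, mul_one]
    apply pow_le_pow_left₀ (by positivity)
    rw [div_le_div_iff₀ (by positivity) (by positivity)]
    nlinarith [Nat.cast_nonneg (α := ℝ) a]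
  have key := pow_gm a b ha hb
  rw [div_pow, div_pow, div_pow, div_mul_div_comm, ← pow_add]
  rw [div_le_div_iff₀ (by positivity) (by positivity)]
  calc ((a:ℝ)+b)^(a+b) * Real.exp 1 ^(a+b)
      ≤ ((2*(a:ℝ))^a * (2*(b:ℝ))^b) * Real.exp 1 ^(a+b) :=
        mul_le_mul_of_nonneg_right key (by positivity)
    _ = (a:ℝ)^a * (b:ℝ)^b * (2*Real.exp 1)^(a+b) := by
        rw [mul_pow, mul_pow, mul_pow, pow_add, pow_add]; ring

set_option maxHeartbeats 1000000 in
theorem prod_abs_sub_mul_ge_of_round_mem (α : ℝ) (hα : Irrational α)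
    (k x y : ℤ) (hk : 1 ≤ k) (hxy : x ≤ y)
    (h : round ((k : ℝ) * α) ∈ Set.Icc x y) :
    ∏ j ∈ Finset.Icc x y, |(j : ℝ) - (k : ℝ) * α| ≥
      (((y - x : ℤ) : ℝ) / (2 * Real.exp 1)) ^ (y - x).toNat *
        |(k : ℝ) * α - round ((k : ℝ) * α)| := by
  obtain ⟨hxn, hny⟩ := h
  set β : ℝ := (k:ℝ)*α with hβ
  set n : ℤ := round β with hn
  set m : ℕ := (y - x).toNat with hm
  set a : ℕ := (n - x).toNat with ha
  set b : ℕ := (y - n).toNat with hb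
  have hma : m = a + b := by omega
  have haZ : (a:ℤ) = n - x := Int.toNat_of_nonneg (by omega)
  have hbZ : (b:ℤ) = y - n := Int.toNat_of_nonneg (by omega)
  have hmZ : (m:ℤ) = y - x := Int.toNat_of_nonneg (by omega)
  have hax : (n:ℝ) = (x:ℝ) + a := by
    have := congrArg (fun t : ℤ => (t:ℝ)) haZ
    push_cast at this; linarith
  have hdist : |β - (n:ℝ)| ≤ 1/2 := by
    exact abs_sub_round β
  have hdist0 : (0:ℝ) ≤ |β - (n:ℝ)| := abs_nonneg _
  -- reindex the product
  have hIcc : Finset.Icc x y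
      = Finset.map ⟨fun i : ℕ => x + (i:ℤ), (show Function.Injective (fun i : ℕ => x + (i:ℤ)) from fun i j hij => Nat.cast_injective (add_left_cancel hij))⟩ (Finset.range (m+1)) := by
    ext j
    simp only [Finset.mem_Icc, Finset.mem_map, Finset.mem_range, Function.Embedding.coeFn_mk]
    constructor
    · intro hj; exact ⟨(j - x).toNat, by omega, by omega⟩
    · rintro ⟨i, hi, rfl⟩; omega
  rw [ge_iff_le, hIcc, Finset.prod_map]
  simp only [Function.Embedding.coeFn_mk]
  have hmem : a ∈ Finset.range (m+1) := by simp only [Finset.mem_range]; omega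
  rw [← Finset.mul_prod_erase _ _ hmem]
  have hga : |((x + (a:ℤ) : ℤ):ℝ) - β| = |β - (n:ℝ)| := by
    rw [abs_sub_comm]; congr 1; push_cast [hax]; ring
  rw [hga]
  -- lower bound each remaining factor
  have hfac : ∀ i ∈ (Finset.range (m+1)).erase a,
      |(i:ℝ) - (a:ℝ)| - 1/2 ≤ |((x + (i:ℤ) : ℤ):ℝ) - β| := by
    intro i hi
    have h1 : |((x + (i:ℤ) : ℤ):ℝ) - (n:ℝ)| = |(i:ℝ) - (a:ℝ)| := by
      congr 1; push_cast [hax]; ring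
    calc |(i:ℝ) - (a:ℝ)| - 1/2
        ≤ |((x + (i:ℤ) : ℤ):ℝ) - (n:ℝ)| - |β - (n:ℝ)| := by rw [h1]; linarith
      _ ≤ |(((x + (i:ℤ) : ℤ):ℝ) - (n:ℝ)) - (β - (n:ℝ))| := abs_sub_abs_le_abs_sub _ _
      _ = |((x + (i:ℤ) : ℤ):ℝ) - β| := by ring_nf
  have hfac0 : ∀ i ∈ (Finset.range (m+1)).erase a, (0:ℝ) ≤ |(i:ℝ) - (a:ℝ)| - 1/2 := by
    intro i hi
    have hia : i ≠ a := (Finset.mem_erase.mp hi).1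
    have hia' : (i:ℤ) ≠ (a:ℤ) := by exact_mod_cast hia
    have h1 : (1:ℤ) ≤ |(i:ℤ) - (a:ℤ)| := Int.one_le_abs (sub_ne_zero.mpr hia')
    have h2 : (1:ℝ) ≤ |(i:ℝ) - (a:ℝ)| := by
      calc (1:ℝ) = ((1:ℤ):ℝ) := by norm_num
        _ ≤ ((|(i:ℤ) - (a:ℤ)|:ℤ):ℝ) := by exact_mod_cast h1
        _ = |(i:ℝ) - (a:ℝ)| := by push_cast [Int.cast_abs]; norm_num
    linarith
  have hprod1 : ∏ i ∈ (Finset.range (m+1)).erase a, (|(i:ℝ) - (a:ℝ)| - 1/2)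
      ≤ ∏ i ∈ (Finset.range (m+1)).erase a, |((x + (i:ℤ) : ℤ):ℝ) - β| :=
    Finset.prod_le_prod hfac0 hfac
  -- compute the model product
  have hset : (Finset.range (m+1)).erase a = Finset.range a ∪ Finset.Icc (a+1) m := by
    ext i
    simp only [Finset.mem_erase, Finset.mem_range, Finset.mem_union, Finset.mem_Icc]
    omega
  have hdisj : Disjoint (Finset.range a) (Finset.Icc (a+1) m) := by
    rw [Finset.disjoint_left]
    intro i hi hi'
    simp only [Finset.mem_range] at hi
    simp only [Finset.mem_Icc] at hi'
    omega
  have hleft : ∏ i ∈ Finset.range a, (|(i:ℝ) - (a:ℝ)| - 1/2)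
      = ∏ i ∈ Finset.range a, ((i:ℝ) + 1/2) := by
    rw [← Finset.prod_range_reflect (fun j => (j:ℝ) + 1/2) a]
    apply Finset.prod_congr rfl
    intro i hi
    simp only [Finset.mem_range] at hi
    rw [abs_sub_comm, abs_of_pos (by
      have : (i:ℝ) < a := by exact_mod_cast hi
      linarith)]
    rw [Nat.cast_sub (by omega), Nat.cast_sub (by omega), Nat.cast_one]
    ring
  have hright : ∏ i ∈ Finset.Icc (a+1) m, (|(i:ℝ) - (a:ℝ)| - 1/2)
      = ∏ i ∈ Finset.range b, ((i:ℝ) + 1/2) := by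
    rw [← Finset.Ico_add_one_right_eq_Icc, Finset.prod_Ico_eq_prod_range]
    have hco : m + 1 - (a+1) = b := by omega
    rw [hco]
    apply Finset.prod_congr rfl
    intro i hi
    rw [abs_of_nonneg (by push_cast; linarith [Nat.cast_nonneg (α := ℝ) i])]
    push_cast; ring
  have hPab : ∏ i ∈ (Finset.range (m+1)).erase a, (|(i:ℝ) - (a:ℝ)| - 1/2)
      = (∏ i ∈ Finset.range a, ((i:ℝ) + 1/2)) * (∏ i ∈ Finset.range b, ((i:ℝ) + 1/2)) := by
    rw [hset, Finset.prod_union hdisj, hleft, hright]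
  -- chain
  have hstep : ((m:ℝ)/(2*Real.exp 1))^m
      ≤ ∏ i ∈ (Finset.range (m+1)).erase a, (|(i:ℝ) - (a:ℝ)| - 1/2) := by
    rw [hPab]
    calc ((m:ℝ)/(2*Real.exp 1))^m = (((a:ℝ)+b)/(2*Real.exp 1))^(a+b) := by
          rw [hma]; push_cast; ring_nf
      _ ≤ ((a:ℝ)/Real.exp 1)^a * ((b:ℝ)/Real.exp 1)^b := gm_bound a b
      _ ≤ (∏ i ∈ Finset.range a, ((i:ℝ) + 1/2)) * (∏ i ∈ Finset.range b, ((i:ℝ) + 1/2)) := by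
          apply mul_le_mul (prod_half_ge a) (prod_half_ge b) (by positivity)
          exact le_trans (by positivity) (prod_half_ge a)
  have hmcast : ((y - x : ℤ) : ℝ) = (m:ℝ) := by exact_mod_cast congrArg (fun t : ℤ => (t:ℝ)) hmZ.symm
  have habs : |β - ((round β : ℤ):ℝ)| = |β - (n:ℝ)| := rfl
  calc (((y - x : ℤ) : ℝ) / (2 * Real.exp 1)) ^ (y - x).toNat * |β - ((round β:ℤ):ℝ)|
      = |β - (n:ℝ)| * ((m:ℝ)/(2*Real.exp 1))^m := by rw [hmcast]; ring
    _ ≤ |β - (n:ℝ)| * ∏ i ∈ (Finset.range (m+1)).erase a, (|(i:ℝ) - (a:ℝ)| - 1/2) :=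
        mul_le_mul_of_nonneg_left hstep hdist0
    _ ≤ |β - (n:ℝ)| * ∏ i ∈ (Finset.range (m+1)).erase a, |((x + (i:ℤ) : ℤ):ℝ) - β| :=
        mul_le_mul_of_nonneg_left hprod1 hdist0
end

section
/- Let α ∈ (0,1) be irrational with continued fraction convergents p_s/q_s, and define D_α(n) = ∏_{k=1}^n dist(kα, ℤ). If q_s ≤ n < q_{s+1} and 0 ≤ m ≤ n, then D_α(m) · D_α(n-m) ≥ 2^{-n} n^{-2n} q_{s+1}^{-n/q_s}. -/
noncomputable def cfGauss (α : ℝ) : ℕ → ℝ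
  | 0 => Int.fract α
  | s + 1 => Int.fract (1 / cfGauss α s)

noncomputable def cfA (α : ℝ) : ℕ → ℤ
  | 0 => ⌊α⌋
  | s + 1 => ⌊1 / cfGauss α s⌋

noncomputable def cfPQ (α : ℝ) : ℕ → ℤ × ℤ
  | 0 => (⌊α⌋, 1)
  | 1 => (cfA α 1 * ⌊α⌋ + 1, cfA α 1)
  | s + 2 => (cfA α (s + 2) * (cfPQ α (s + 1)).1 + (cfPQ α s).1,
              cfA α (s + 2) * (cfPQ α (s + 1)).2 + (cfPQ α s).2)

/-- Numerator `p_s` of the `s`-th continued fraction convergent of `α`. -/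
noncomputable def cfP (α : ℝ) (s : ℕ) : ℤ := (cfPQ α s).1

/-- Denominator `q_s` of the `s`-th continued fraction convergent of `α`. -/
noncomputable def cfQ (α : ℝ) (s : ℕ) : ℤ := (cfPQ α s).2

/-- Distance from a real number to the nearest integer. -/
noncomputable def distZ (x : ℝ) : ℝ := |x - round x|

/-- `D_α(n) = ∏_{k=1}^n dist(kα, ℤ)`. -/
noncomputable def Dalpha (α : ℝ) (n : ℕ) : ℝ := ∏ k ∈ Finset.Icc 1 n, distZ (k * α)

section CF
variable {α : ℝ}

lemma irrational_fract {x : ℝ} (h : Irrational x) : Irrational (Int.fract x) := by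
  unfold Int.fract; exact h.sub_intCast _

lemma fract_mem_Ioo {x : ℝ} (h : Irrational x) : Int.fract x ∈ Set.Ioo (0:ℝ) 1 := by
  refine ⟨lt_of_le_of_ne (Int.fract_nonneg x) ?_, Int.fract_lt_one x⟩
  intro hz
  exact (irrational_fract h) ⟨0, by norm_num [← hz]⟩

lemma gauss_irrational (hα : Irrational α) : ∀ t, Irrational (cfGauss α t)
  | 0 => irrational_fract hα
  | t + 1 => by
    have h := gauss_irrational hα t
    show Irrational (Int.fract (1 / cfGauss α t))
    rw [one_div]
    exact irrational_fract h.inv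

lemma gauss_mem_Ioo (hα : Irrational α) (t : ℕ) : cfGauss α t ∈ Set.Ioo (0:ℝ) 1 := by
  rcases t with _ | t
  · exact fract_mem_Ioo hα
  · show Int.fract (1 / cfGauss α t) ∈ _
    rw [one_div]
    exact fract_mem_Ioo (gauss_irrational hα t).inv

lemma one_le_cfA_succ (hα : Irrational α) (t : ℕ) : 1 ≤ cfA α (t + 1) := by
  show (1:ℤ) ≤ ⌊1 / cfGauss α t⌋
  rw [Int.le_floor]
  have h := gauss_mem_Ioo hα t
  rw [le_div_iff₀ h.1]
  push_cast; linarith [h.2]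

lemma cfQ_zero : cfQ α 0 = 1 := rfl
lemma cfQ_one : cfQ α 1 = cfA α 1 := rfl
lemma cfQ_two_add (t : ℕ) : cfQ α (t + 2) = cfA α (t + 2) * cfQ α (t + 1) + cfQ α t := rfl
lemma cfP_two_add (t : ℕ) : cfP α (t + 2) = cfA α (t + 2) * cfP α (t + 1) + cfP α t := rfl

lemma one_le_cfQ (hα : Irrational α) : ∀ t, 1 ≤ cfQ α t ∧ cfQ α t ≤ cfQ α (t + 1)
  | 0 => ⟨le_refl _, by rw [cfQ_zero, cfQ_one]; exact one_le_cfA_succ hα 0⟩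
  | t + 1 => by
    obtain ⟨h1, h2⟩ := one_le_cfQ hα t
    have ha := one_le_cfA_succ hα (t + 1)
    refine ⟨le_trans h1 h2, ?_⟩
    rw [cfQ_two_add]
    nlinarith

lemma det_eq (hα : Irrational α) : ∀ t, cfP α (t+1) * cfQ α t - cfP α t * cfQ α (t+1) = (-1)^t
  | 0 => by
    show (cfA α 1 * ⌊α⌋ + 1) * 1 - ⌊α⌋ * cfA α 1 = 1
    ring
  | t + 1 => by
    have ih := det_eq hα t
    rw [cfP_two_add, cfQ_two_add, pow_succ]
    nlinarith [ih]


noncomputable def Bprod (α : ℝ) (t : ℕ) : ℝ := ∏ i ∈ Finset.range (t+1), cfGauss α i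

lemma Bprod_succ (t : ℕ) : Bprod α (t+1) = Bprod α t * cfGauss α (t+1) :=
  Finset.prod_range_succ _ _

lemma Bprod_pos (hα : Irrational α) (t : ℕ) : 0 < Bprod α t :=
  Finset.prod_pos fun i _ => (gauss_mem_Ioo hα i).1

lemma Bprod_lt_one (hα : Irrational α) (t : ℕ) : Bprod α t < 1 := by
  induction t with
  | zero => simpa [Bprod] using (gauss_mem_Ioo hα 0).2
  | succ t ih =>
    rw [Bprod_succ]
    have h := gauss_mem_Ioo hα (t+1)
    have := mul_lt_of_lt_one_right (Bprod_pos hα t) h.2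
    linarith

lemma gauss_succ_eq (t : ℕ) :
    cfGauss α (t+1) = 1 / cfGauss α t - cfA α (t+1) := rfl

lemma beta_eq (hα : Irrational α) (h01 : α ∈ Set.Ioo (0:ℝ) 1) :
    ∀ t, (cfQ α t : ℝ) * α - cfP α t = (-1)^t * Bprod α t
  | 0 => by
    have hf : ⌊α⌋ = 0 := Int.floor_eq_zero_iff.2 ⟨h01.1.le, h01.2⟩
    show ((1:ℤ):ℝ) * α - ((⌊α⌋:ℤ):ℝ) = _
    have : Bprod α 0 = Int.fract α := by simp [Bprod, cfGauss]
    rw [this, hf, Int.fract]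
    push_cast [hf]; ring
  | 1 => by
    have hf : ⌊α⌋ = 0 := Int.floor_eq_zero_iff.2 ⟨h01.1.le, h01.2⟩
    have hg0 : cfGauss α 0 = α := by
      show Int.fract α = α; exact Int.fract_eq_self.2 ⟨h01.1.le, h01.2⟩
    have hB : Bprod α 1 = α * (1/α - (cfA α 1 : ℝ)) := by
      rw [Bprod, Finset.prod_range_succ]
      simp [Finset.prod_range_one, hg0, gauss_succ_eq, hg0]
    show ((cfA α 1 : ℝ)) * α - ((cfA α 1 * ⌊α⌋ + 1 : ℤ) : ℝ) = _
    rw [hB, hf]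
    have hα0 : α ≠ 0 := ne_of_gt h01.1
    push_cast
    field_simp
    ring
  | t + 2 => by
    have ih1 := beta_eq hα h01 (t+1)
    have ih0 := beta_eq hα h01 t
    have hg : cfGauss α (t+1) ≠ 0 := ne_of_gt (gauss_mem_Ioo hα (t+1)).1
    have hrec : cfGauss α (t+2) = 1 / cfGauss α (t+1) - cfA α (t+2) := rfl
    have hq : (cfQ α (t+2) : ℝ) = cfA α (t+2) * cfQ α (t+1) + cfQ α t := by
      rw [show cfQ α (t+2) = cfA α (t + 2) * cfQ α (t + 1) + cfQ α t from rfl]; push_cast; ring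
    have hp : (cfP α (t+2) : ℝ) = cfA α (t+2) * cfP α (t+1) + cfP α t := by
      rw [show cfP α (t+2) = cfA α (t + 2) * cfP α (t + 1) + cfP α t from rfl]; push_cast; ring
    have hB2 : Bprod α (t+2) = Bprod α (t+1) * cfGauss α (t+2) := Bprod_succ _
    have hB1 : Bprod α (t+1) = Bprod α t * cfGauss α (t+1) := Bprod_succ _
    rw [hq, hp, hB2, hB1, hrec]
    have e1 : (cfQ α (t+1) : ℝ) * α - cfP α (t+1) = (-1)^(t+1) * (Bprod α t * cfGauss α (t+1)) := by
      rw [ih1, hB1]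
    have hinv : cfGauss α (t+1) * (1/cfGauss α (t+1)) = 1 := mul_one_div_cancel hg
    linear_combination ((cfA α (t+2) : ℝ)) * e1 + ih0 - (-1)^t * Bprod α t * hinv

lemma key_identity (hα : Irrational α) (h01 : α ∈ Set.Ioo (0:ℝ) 1) (s : ℕ) :
    (cfQ α (s+1) : ℝ) * Bprod α s + (cfQ α s : ℝ) * Bprod α (s+1) = 1 := by
  have h0 := beta_eq hα h01 s
  have h1 := beta_eq hα h01 (s+1)
  have hd := det_eq hα s
  have hd' : (cfP α (s+1) : ℝ) * cfQ α s - (cfP α s : ℝ) * cfQ α (s+1) = (-1)^s := by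
    exact_mod_cast congrArg (Int.cast : ℤ → ℝ) hd
  rcases Nat.even_or_odd s with he | ho
  · rw [he.neg_one_pow] at h0 hd'
    rw [Odd.neg_one_pow (by exact he.add_one)] at h1
    linear_combination -(cfQ α (s+1) : ℝ) * h0 + (cfQ α s : ℝ) * h1 + hd'
  · rw [ho.neg_one_pow] at h0 hd'
    rw [Even.neg_one_pow (by exact ho.add_one)] at h1
    linear_combination (cfQ α (s+1) : ℝ) * h0 - (cfQ α s : ℝ) * h1 - hd'

lemma Bprod_ge (hα : Irrational α) (h01 : α ∈ Set.Ioo (0:ℝ) 1) (s : ℕ) :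
    1 ≤ 2 * (cfQ α (s+1) : ℝ) * Bprod α s := by
  have hk := key_identity hα h01 s
  have hB0 := Bprod_pos hα s
  have hB1 : Bprod α (s+1) ≤ Bprod α s := by
    rw [Bprod_succ]
    nlinarith [(gauss_mem_Ioo hα (s+1)).2, (gauss_mem_Ioo hα (s+1)).1]
  have hq01 : (cfQ α s : ℝ) ≤ (cfQ α (s+1) : ℝ) := by exact_mod_cast (one_le_cfQ hα s).2
  have hq0 : (1:ℝ) ≤ (cfQ α s : ℝ) := by exact_mod_cast (one_le_cfQ hα s).1
  nlinarith [Bprod_pos hα (s+1)]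

lemma exists_xy (hα : Irrational α) (h01 : α ∈ Set.Ioo (0:ℝ) 1) (s : ℕ) (k : ℕ)
    (hk1 : 1 ≤ k) (hk2 : (k : ℝ) < cfQ α (s+1)) :
    ∃ x y : ℤ, x * cfQ α (s+1) + y * cfQ α s = (k:ℤ) ∧ y ≠ 0 ∧ x * y ≤ 0 ∧
      |(y:ℝ)| * Bprod α s ≤ distZ ((k:ℝ) * α) ∧ (x = 0 → (cfQ α s) ∣ (k:ℤ)) := by
  set q0 := cfQ α s
  set q1 := cfQ α (s+1)
  set p0 := cfP α s
  set p1 := cfP α (s+1)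
  set c : ℤ := round ((k:ℝ) * α) with hc
  set d : ℤ := (-1)^s with hdd
  have hd2 : d * d = 1 := by
    rw [hdd, ← pow_add]
    exact Even.neg_one_pow ⟨s, rfl⟩
  have hdet : p1 * q0 - p0 * q1 = d := det_eq hα s
  set x : ℤ := d * (c * q0 - k * p0) with hxd
  set y : ℤ := d * (k * p1 - c * q1) with hyd
  have heq1 : x * q1 + y * q0 = (k:ℤ) := by
    rw [hxd, hyd]; linear_combination (d * (k:ℤ)) * hdet + (k:ℤ) * hd2
  have heq2 : x * p1 + y * p0 = c := by
    rw [hxd, hyd]; linear_combination (d * c) * hdet + c * hd2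
  have hk2' : (k:ℤ) < q1 := by exact_mod_cast hk2
  have hk1' : (1:ℤ) ≤ (k:ℤ) := by exact_mod_cast hk1
  have hq0 : (1:ℤ) ≤ q0 := (one_le_cfQ hα s).1
  have hq1 : (1:ℤ) ≤ q1 := (one_le_cfQ hα (s+1)).1
  have hy : y ≠ 0 := by
    intro h
    rw [h] at heq1
    simp only [zero_mul, add_zero] at heq1
    rcases le_or_gt x 0 with hx | hx
    · nlinarith
    · have : 1 ≤ x := hx
      nlinarith
  have hxy : x * y ≤ 0 := by
    by_contra h
    push_neg at h
    rcases mul_pos_iff.1 h with ⟨hx, hy'⟩ | ⟨hx, hy'⟩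
    · have h1 : q1 ≤ x * q1 := le_mul_of_one_le_left (by linarith) hx
      have h2 : q0 ≤ y * q0 := le_mul_of_one_le_left (by linarith) hy'
      linarith
    · have h1 : x * q1 ≤ -q1 := by nlinarith
      have h2 : y * q0 ≤ -q0 := by nlinarith
      linarith
  refine ⟨x, y, heq1, hy, hxy, ?_, ?_⟩
  · -- the abs inequality
    have hcast1 : (x:ℝ) * q1 + y * q0 = k := by exact_mod_cast heq1
    have hcast2 : (x:ℝ) * p1 + y * p0 = c := by exact_mod_cast heq2
    have hbeta0 := beta_eq hα h01 s
    have hbeta1 := beta_eq hα h01 (s+1)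
    have h4 : (k:ℝ) * α - c = (x:ℝ) * ((q1:ℝ) * α - p1) + y * ((q0:ℝ) * α - p0) := by
      linear_combination -α * hcast1 + hcast2
    have h5 : (k:ℝ) * α - c = (-1)^s * ((y:ℝ) * Bprod α s - x * Bprod α (s+1)) := by
      linear_combination h4 + (x:ℝ) * hbeta1 + (y:ℝ) * hbeta0
    have hdist : distZ ((k:ℝ) * α) = |(y:ℝ) * Bprod α s - x * Bprod α (s+1)| := by
      show |(k:ℝ) * α - round ((k:ℝ) * α)| = _
      rw [← hc, h5, abs_mul, abs_pow, abs_neg, abs_one, one_pow, one_mul]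
    rw [hdist]
    have hB0 := Bprod_pos hα s
    have hB1 := Bprod_pos hα (s+1)
    have hxyR : (x:ℝ) * y ≤ 0 := by exact_mod_cast hxy
    rcases lt_trichotomy (y:ℝ) 0 with hy' | hy' | hy'
    · have hx' : 0 ≤ (x:ℝ) := by nlinarith
      rw [abs_of_neg hy']
      calc -(y:ℝ) * Bprod α s ≤ -((y:ℝ) * Bprod α s - x * Bprod α (s+1)) := by nlinarith
        _ ≤ |(y:ℝ) * Bprod α s - x * Bprod α (s+1)| := neg_le_abs _
    · exact absurd (by exact_mod_cast hy') hy
    · have hx' : (x:ℝ) ≤ 0 := by nlinarith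
      rw [abs_of_pos hy']
      calc (y:ℝ) * Bprod α s ≤ (y:ℝ) * Bprod α s - x * Bprod α (s+1) := by nlinarith
        _ ≤ |(y:ℝ) * Bprod α s - x * Bprod α (s+1)| := le_abs_self _
  · intro hx0
    rw [hx0] at heq1
    exact ⟨y, by linear_combination -heq1⟩

lemma cfQ_pos_real (hα : Irrational α) (t : ℕ) : (0:ℝ) < (cfQ α t : ℝ) := by
  have := (one_le_cfQ hα t).1
  exact_mod_cast lt_of_lt_of_le zero_lt_one (by exact_mod_cast this)

lemma distZ_ge_all (hα : Irrational α) (h01 : α ∈ Set.Ioo (0:ℝ) 1) (s k : ℕ)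
    (hk1 : 1 ≤ k) (hk2 : (k : ℝ) < cfQ α (s+1)) :
    1 / (2 * (cfQ α (s+1) : ℝ)) ≤ distZ ((k:ℝ) * α) := by
  obtain ⟨x, y, heq1, hy, hxy, habs, hdvd⟩ := exists_xy hα h01 s k hk1 hk2
  have hB0 := Bprod_pos hα s
  have hBg := Bprod_ge hα h01 s
  have hq1 := cfQ_pos_real hα (s+1)
  have hy1 : (1:ℝ) ≤ |(y:ℝ)| := by
    have : (1:ℤ) ≤ |y| := Int.one_le_abs hy
    exact_mod_cast (by exact_mod_cast this : (1:ℝ) ≤ ((|y|:ℤ):ℝ))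
  have : Bprod α s ≤ |(y:ℝ)| * Bprod α s := le_mul_of_one_le_left hB0.le hy1
  rw [div_le_iff₀ (by positivity)]
  nlinarith

lemma distZ_ge_nondiv (hα : Irrational α) (h01 : α ∈ Set.Ioo (0:ℝ) 1) (s k n : ℕ)
    (hq : (cfQ α s : ℝ) ≤ n) (hn : (n:ℝ) < cfQ α (s+1))
    (hk1 : 1 ≤ k) (hkn : k ≤ n) (hndvd : ¬ (cfQ α s ∣ (k:ℤ))) :
    1 / (4 * (n:ℝ)) ≤ distZ ((k:ℝ) * α) := by
  have hkn' : (k:ℝ) ≤ (n:ℝ) := by exact_mod_cast hkn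
  have hk2 : (k:ℝ) < cfQ α (s+1) := lt_of_le_of_lt hkn' hn
  have hq1 := cfQ_pos_real hα (s+1)
  have hq0 := cfQ_pos_real hα s
  have hnpos : (0:ℝ) < n := lt_of_lt_of_le hq0 hq
  rcases le_or_gt (cfQ α (s+1) : ℝ) (2 * n) with hcase | hcase
  · calc 1 / (4 * (n:ℝ)) ≤ 1 / (2 * (cfQ α (s+1) : ℝ)) := by
          apply one_div_le_one_div_of_le (by positivity); linarith
      _ ≤ _ := distZ_ge_all hα h01 s k hk1 hk2
  · obtain ⟨x, y, heq1, hy, hxy, habs, hdvd⟩ := exists_xy hα h01 s k hk1 hk2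
    have hx : x ≠ 0 := fun h => hndvd (hdvd h)
    have hB0 := Bprod_pos hα s
    have hBg := Bprod_ge hα h01 s
    -- |y| * q0 ≥ q1 / 2 in ℝ
    have heq1R : (x:ℝ) * (cfQ α (s+1):ℝ) + (y:ℝ) * (cfQ α s:ℝ) = k := by exact_mod_cast heq1
    have hyq : (cfQ α (s+1) : ℝ) / 2 ≤ |(y:ℝ)| * (cfQ α s : ℝ) := by
      rcases lt_or_gt_of_ne hx with hxneg | hxpos
      · -- x ≤ -1, y ≥ 1 : y*q0 = k - x*q1 ≥ 1 + q1
        have hx1 : (x:ℝ) ≤ -1 := by exact_mod_cast Int.le_sub_one_of_lt hxneg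
        have h1 : (1:ℝ) ≤ (k:ℝ) := by exact_mod_cast hk1
        have h2 : (y:ℝ) * (cfQ α s:ℝ) = k - x * (cfQ α (s+1):ℝ) := by linarith
        have h3 : (cfQ α (s+1):ℝ) / 2 ≤ (y:ℝ) * (cfQ α s:ℝ) := by nlinarith
        calc (cfQ α (s+1):ℝ)/2 ≤ (y:ℝ) * (cfQ α s:ℝ) := h3
          _ ≤ |(y:ℝ)| * (cfQ α s:ℝ) := by
              apply mul_le_mul_of_nonneg_right (le_abs_self _) hq0.le
      · have hx1 : (1:ℝ) ≤ (x:ℝ) := by exact_mod_cast hxpos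
        have h2 : -((y:ℝ) * (cfQ α s:ℝ)) = x * (cfQ α (s+1):ℝ) - k := by linarith
        have h3 : (cfQ α (s+1):ℝ)/2 ≤ -((y:ℝ) * (cfQ α s:ℝ)) := by nlinarith
        calc (cfQ α (s+1):ℝ)/2 ≤ -((y:ℝ) * (cfQ α s:ℝ)) := h3
          _ = -(y:ℝ) * (cfQ α s:ℝ) := by ring
          _ ≤ |(y:ℝ)| * (cfQ α s:ℝ) := by
              apply mul_le_mul_of_nonneg_right (neg_le_abs _) hq0.le
    -- conclude
    have hyabs : (0:ℝ) ≤ |(y:ℝ)| := abs_nonneg _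
    rw [div_le_iff₀ (by positivity)]
    have step : |(y:ℝ)| * Bprod α s * (4 * (cfQ α s:ℝ)) ≥ 1 := by nlinarith
    have hmono : |(y:ℝ)| * Bprod α s * (4 * (cfQ α s:ℝ)) ≤ |(y:ℝ)| * Bprod α s * (4 * (n:ℝ)) := by
      apply mul_le_mul_of_nonneg_left (by linarith) (by positivity)
    nlinarith [mul_le_mul_of_nonneg_right habs (by positivity : (0:ℝ) ≤ 4 * (n:ℝ))]

lemma D_ge (hα : Irrational α) (h01 : α ∈ Set.Ioo (0:ℝ) 1) (s n M : ℕ)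
    (hq : (cfQ α s : ℝ) ≤ n) (hn : (n:ℝ) < cfQ α (s+1)) (hMn : M ≤ n) :
    (1 / (2 * (cfQ α (s+1) : ℝ))) ^ (M / (cfQ α s).toNat) *
      (1 / (4 * (n:ℝ))) ^ (M - M / (cfQ α s).toNat) ≤ Dalpha α M := by
  set Q := (cfQ α s).toNat with hQdef
  have hq0 : (1:ℤ) ≤ cfQ α s := (one_le_cfQ hα s).1
  have hQcast : ((Q:ℕ):ℤ) = cfQ α s := Int.toNat_of_nonneg (by linarith)
  have hq1 := cfQ_pos_real hα (s+1)
  have hnpos : (0:ℝ) < n := lt_of_lt_of_le (cfQ_pos_real hα s) hq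
  set A := 1 / (2 * (cfQ α (s+1) : ℝ)) with hA
  set C := 1 / (4 * (n:ℝ)) with hC
  have hbound : ∀ k ∈ Finset.Icc 1 M, (if Q ∣ k then A else C) ≤ distZ ((k:ℝ) * α) := by
    intro k hk
    rw [Finset.mem_Icc] at hk
    have hkn : k ≤ n := le_trans hk.2 hMn
    have hk2 : (k:ℝ) < cfQ α (s+1) := lt_of_le_of_lt (by exact_mod_cast hkn) hn
    split_ifs with hdvd
    · exact distZ_ge_all hα h01 s k hk.1 hk2
    · refine distZ_ge_nondiv hα h01 s k n hq hn hk.1 hkn ?_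
      intro hd
      exact hdvd (by
        have : ((Q:ℕ):ℤ) ∣ (k:ℤ) := by rw [hQcast]; exact hd
        exact_mod_cast this)
  have hprod : ∏ k ∈ Finset.Icc 1 M, (if Q ∣ k then A else C) ≤ Dalpha α M := by
    apply Finset.prod_le_prod
    · intro k _
      split_ifs
      · rw [hA]; positivity
      · rw [hC]; positivity
    · exact hbound
  refine le_trans (le_of_eq ?_) hprod
  rw [Finset.prod_ite (fun _ => A) (fun _ => C), Finset.prod_const, Finset.prod_const]
  have hc1 : ((Finset.Icc 1 M).filter (Q ∣ ·)).card = M / Q :=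
    Nat.Ioc_filter_dvd_card_eq_div M Q
  have hc2 : ((Finset.Icc 1 M).filter (¬ Q ∣ ·)).card = M - M / Q := by
    have := Finset.card_filter_add_card_filter_not (s := Finset.Icc 1 M)
      (p := (Q ∣ ·))
    rw [hc1, Nat.card_Icc] at this
    omega
  rw [hc1, hc2]

end CF

theorem Dalpha_mul_lower_bound (α : ℝ) (hα : Irrational α) (h01 : α ∈ Set.Ioo (0 : ℝ) 1)
    (n m s : ℕ) (hm : m ≤ n) (h1 : (cfQ α s : ℝ) ≤ n) (h2 : (n : ℝ) < cfQ α (s + 1)) :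
    Dalpha α m * Dalpha α (n - m) ≥
      (2 : ℝ) ^ (-(n : ℝ)) * (n : ℝ) ^ (-(2 * (n : ℝ))) *
        ((cfQ α (s + 1) : ℝ)) ^ (-((n : ℝ) / (cfQ α s : ℝ))) := by
  set Q := (cfQ α s).toNat with hQdef
  have hq0 : (1:ℤ) ≤ cfQ α s := (one_le_cfQ hα s).1
  have hQcast : ((Q:ℕ):ℤ) = cfQ α s := Int.toNat_of_nonneg (by linarith)
  have hQ1 : 1 ≤ Q := by omega
  have hQR : ((Q:ℕ):ℝ) = (cfQ α s : ℝ) := by exact_mod_cast congrArg (Int.cast : ℤ → ℝ) hQcast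
  have hq0R : (1:ℝ) ≤ (cfQ α s : ℝ) := by exact_mod_cast hq0
  have hq1R : (1:ℝ) ≤ (cfQ α (s+1) : ℝ) := by exact_mod_cast (one_le_cfQ hα (s+1)).1
  have hq1pos : (0:ℝ) < (cfQ α (s+1) : ℝ) := by linarith
  have hnpos : (0:ℝ) < (n:ℝ) := by linarith
  have hn1 : 1 ≤ n := by exact_mod_cast (by linarith : (1:ℝ) ≤ (n:ℝ))
  set q1R := (cfQ α (s+1) : ℝ) with hq1Rdef
  set nR := (n:ℝ) with hnRdef
  set A := 1 / (2 * q1R) with hA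
  set C := 1 / (4 * nR) with hC
  set cm := m / Q with hcm
  set cn := (n - m) / Q with hcn
  set b := cm + cn with hb
  have hcmm : cm ≤ m := Nat.div_le_self _ _
  have hcnn : cn ≤ n - m := Nat.div_le_self _ _
  have hbn : b ≤ n := by omega
  set e := n - b with he
  -- step 1: product lower bound
  have hD1 := D_ge hα h01 s n m h1 h2 hm
  have hD2 := D_ge hα h01 s n (n - m) h1 h2 (Nat.sub_le n m)
  have hApos : (0:ℝ) < A := by rw [hA]; positivity
  have hCpos : (0:ℝ) < C := by rw [hC]; positivity
  have hstep1 : A ^ b * C ^ e ≤ Dalpha α m * Dalpha α (n - m) := by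
    have := mul_le_mul hD1 hD2 (by positivity) (le_trans (by positivity) hD1)
    calc A ^ b * C ^ e
        = (A ^ cm * C ^ (m - cm)) * (A ^ cn * C ^ ((n - m) - cn)) := by
          rw [hb, pow_add]
          rw [show e = (m - cm) + ((n - m) - cn) by omega, pow_add]
          ring
      _ ≤ _ := this
  refine ge_trans hstep1 ?_
  -- step 2: numeric comparison
  set X := nR / (cfQ α s : ℝ) with hX
  have hbX : (b:ℝ) ≤ X := by
    have hbnat : b ≤ n / Q := by
      rw [Nat.le_div_iff_mul_le (by omega)]
      have e1 : cm * Q ≤ m := Nat.div_mul_le_self _ _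
      have e2 : cn * Q ≤ n - m := Nat.div_mul_le_self _ _
      rw [hb, add_mul]; omega
    calc (b:ℝ) ≤ ((n / Q : ℕ):ℝ) := by exact_mod_cast hbnat
      _ ≤ nR / ((Q:ℕ):ℝ) := Nat.cast_div_le
      _ = X := by rw [hQR]
  have hq1rpow : q1R ^ (-X) ≤ (q1R ^ b)⁻¹ := by
    have h1' : q1R ^ (-X) ≤ q1R ^ (-(b:ℝ)) :=
      Real.rpow_le_rpow_of_exponent_le hq1R (by linarith)
    have h2' : q1R ^ (-(b:ℝ)) = (q1R ^ b)⁻¹ := by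
      rw [Real.rpow_neg hq1pos.le, Real.rpow_natCast]
    linarith [h1', h2'.le]
  -- claimC : 2^b * 4^e * nR^e ≤ 2^n * nR^(2n)
  have claimC : (2:ℝ)^b * 4^e * nR^e ≤ 2^n * nR^(2*n) := by
    have hben : b + e = n := by omega
    have h24 : (2:ℝ)^b * 4^e = 2^n * 2^e := by
      rw [show (4:ℝ) = 2^2 by norm_num, ← pow_mul, ← pow_add, ← pow_add, ← hben]
      ring_nf
    rw [h24]
    have hkey : (2:ℝ)^e * nR^e ≤ nR^(2*n) := by
      rcases eq_or_lt_of_le hQ1 with hQeq | hQ2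
      · have he0 : e = 0 := by
          rw [he, hb, hcm, hcn, ← hQeq]
          simp [Nat.div_one]
          omega
        rw [he0]
        have : (1:ℝ) ≤ nR := by linarith
        simpa using one_le_pow₀ this
      · have hnR2 : (2:ℝ) ≤ nR := by
          have : ((Q:ℕ):ℝ) ≤ nR := by rw [hQR]; exact h1
          have : (2:ℝ) ≤ ((Q:ℕ):ℝ) := by exact_mod_cast hQ2
          linarith [hQR ▸ h1]
        calc (2:ℝ)^e * nR^e = (2*nR)^e := by rw [mul_pow]
          _ ≤ (nR*nR)^e := by
              apply pow_le_pow_left₀ (by positivity)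
              nlinarith
          _ = nR^(2*e) := by rw [show nR*nR = nR^2 by ring, ← pow_mul]
          _ ≤ nR^(2*n) := by
              apply pow_le_pow_right₀ (by linarith)
              rw [he]
              exact Nat.mul_le_mul_left 2 (Nat.sub_le n b)
    nlinarith [pow_pos (show (0:ℝ) < 2 by norm_num) n, pow_nonneg hnpos.le (2*n),
        pow_pos (show (0:ℝ) < 2 by norm_num) e, pow_pos hnpos e]
  have hA2 : A ^ b = ((2:ℝ)^b * q1R^b)⁻¹ := by
    rw [hA, div_pow, one_pow, mul_pow, one_div]
  have hC2 : C ^ e = ((4:ℝ)^e * nR^e)⁻¹ := by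
    rw [hC, div_pow, one_pow, mul_pow, one_div]
  have hr1 : (2:ℝ) ^ (-nR) = ((2:ℝ)^n)⁻¹ := by
    rw [hnRdef, Real.rpow_neg (by norm_num : (0:ℝ) ≤ 2), Real.rpow_natCast]
  have hr2 : nR ^ (-(2 * nR)) = (nR^(2*n))⁻¹ := by
    have hcast : ((2*n : ℕ):ℝ) = 2 * nR := by push_cast [hnRdef]; ring
    rw [← hcast, Real.rpow_neg hnpos.le, Real.rpow_natCast]
  calc (2:ℝ) ^ (-nR) * nR ^ (-(2 * nR)) * q1R ^ (-X)
      = ((2:ℝ)^n * nR^(2*n))⁻¹ * q1R ^ (-X) := by rw [hr1, hr2, mul_inv]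
    _ ≤ ((2:ℝ)^b * 4^e * nR^e)⁻¹ * (q1R^b)⁻¹ := by
        apply mul_le_mul
        · exact inv_anti₀ (by positivity) claimC
        · exact hq1rpow
        · positivity
        · positivity
    _ = A ^ b * C ^ e := by
        rw [hA2, hC2, mul_inv, mul_inv, mul_inv]
        ring
end

section
/- The set S = {α ∈ (0,1) \ ℚ : limsup_{s→∞} (log q_{s+1})/(q_s² log q_s) = +∞} contains a dense G_δ subset of (0,1); in particular S is uncountable. -/
section CF

variable {α : ℝ}

lemma cfQ_rec (s : ℕ) : cfQ α (s + 2) = cfA α (s + 2) * cfQ α (s + 1) + cfQ α s := rfl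
lemma cfP_rec (s : ℕ) : cfP α (s + 2) = cfA α (s + 2) * cfP α (s + 1) + cfP α s := rfl

variable (hirr : Irrational α) (h0 : 0 < α) (h1 : α < 1)
include hirr h0 h1

lemma gauss_basic : ∀ s, Irrational (cfGauss α s) ∧ 0 < cfGauss α s ∧ cfGauss α s < 1 := by
  intro s
  induction s with
  | zero =>
    have : cfGauss α 0 = α := Int.fract_eq_self.2 ⟨h0.le, h1⟩
    rw [this]; exact ⟨hirr, h0, h1⟩
  | succ s ih =>
    obtain ⟨hi, hp, hl⟩ := ih
    have hinv : Irrational (1 / cfGauss α s) := by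
      rw [one_div]; exact hi.inv
    have h1' : cfGauss α (s + 1) = Int.fract (1 / cfGauss α s) := rfl
    have hirr' : Irrational (cfGauss α (s + 1)) := by
      rw [h1', ← Int.self_sub_floor]
      exact hinv.sub_intCast _
    refine ⟨hirr', ?_, h1' ▸ Int.fract_lt_one _⟩
    rw [h1']
    rcases (Int.fract_nonneg (1 / cfGauss α s)).lt_or_eq with h | h
    · exact h
    · exfalso
      have : (1 / cfGauss α s) = (⌊1 / cfGauss α s⌋ : ℝ) := by
        have := Int.self_sub_floor (1 / cfGauss α s)
        rw [← h] at this
        linarith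
      exact hinv.ne_int _ this

omit hirr h0 h1 in
lemma gauss_inv_eq (s : ℕ) :
    1 / cfGauss α s = (cfA α (s + 1) : ℝ) + cfGauss α (s + 1) := by
  have : cfGauss α (s + 1) = Int.fract (1 / cfGauss α s) := rfl
  rw [this, Int.fract]
  have : cfA α (s + 1) = ⌊1 / cfGauss α s⌋ := rfl
  rw [this]; ring

lemma cfA_pos (s : ℕ) : 1 ≤ cfA α (s + 1) := by
  obtain ⟨hi, hp, hl⟩ := gauss_basic hirr h0 h1 s
  have : (1 : ℝ) < 1 / cfGauss α s := by
    rw [lt_div_iff₀ hp]; linarith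
  have : (1 : ℤ) ≤ ⌊1 / cfGauss α s⌋ := by
    rw [Int.le_floor]; push_cast; linarith
  exact this

lemma cfQ_pos : ∀ s, 1 ≤ cfQ α s := by
  have key : ∀ s, 1 ≤ cfQ α s ∧ 1 ≤ cfQ α (s + 1) := by
    intro s
    induction s with
    | zero => exact ⟨le_refl _, by rw [cfQ_one]; exact cfA_pos hirr h0 h1 0⟩
    | succ s ih =>
      refine ⟨ih.2, ?_⟩
      rw [cfQ_rec]
      nlinarith [cfA_pos hirr h0 h1 (s + 1), ih.1, ih.2]
  exact fun s => (key s).1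

lemma cfQ_mono : Monotone (cfQ α) := by
  apply monotone_nat_of_le_succ
  intro s
  match s with
  | 0 => rw [cfQ_zero, cfQ_one]; exact cfA_pos hirr h0 h1 0
  | s + 1 =>
    rw [cfQ_rec]
    nlinarith [cfA_pos hirr h0 h1 (s + 1), cfQ_pos hirr h0 h1 s, cfQ_pos hirr h0 h1 (s + 1)]

lemma cfQ_add_le (s : ℕ) : cfQ α (s + 1) + cfQ α s ≤ cfQ α (s + 2) := by
  rw [cfQ_rec]
  nlinarith [cfA_pos hirr h0 h1 (s + 1), cfQ_pos hirr h0 h1 s, cfQ_pos hirr h0 h1 (s + 1)]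

lemma cfQ_grow : ∀ s : ℕ, (s : ℤ) ≤ cfQ α (s + 1) := by
  have key : ∀ s : ℕ, (s : ℤ) ≤ cfQ α (s + 1) ∧ (s + 1 : ℤ) ≤ cfQ α (s + 2) := by
    intro s
    induction s with
    | zero =>
      constructor
      · exact le_trans (by norm_num) (cfQ_pos hirr h0 h1 1)
      · have h2 : cfQ α 1 + cfQ α 0 ≤ cfQ α 2 := cfQ_add_le hirr h0 h1 0
        have := cfQ_pos hirr h0 h1 0
        have := cfQ_pos hirr h0 h1 1
        push_cast; omega
    | succ s ih =>
      refine ⟨by push_cast at ih ⊢; linarith [ih.2], ?_⟩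
      have h2 : cfQ α (s + 2) + cfQ α (s + 1) ≤ cfQ α (s + 3) := cfQ_add_le hirr h0 h1 (s + 1)
      have h3 : (s : ℤ) + 1 ≤ cfQ α (s + 2) := ih.2
      have := cfQ_pos hirr h0 h1 (s + 1)
      show (s : ℤ) + 1 + 1 ≤ cfQ α (s + 3)
      omega
  exact fun s => (key s).1

lemma cfQ_two_le (s : ℕ) (hs : 2 ≤ s) : 2 ≤ cfQ α s := by
  have h2 : 2 ≤ cfQ α 2 := by
    have ha : cfQ α 1 + cfQ α 0 ≤ cfQ α 2 := cfQ_add_le hirr h0 h1 0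
    have := cfQ_pos hirr h0 h1 0
    have := cfQ_pos hirr h0 h1 1
    omega
  exact le_trans h2 (cfQ_mono hirr h0 h1 hs)

lemma cfGauss_zero_eq : cfGauss α 0 = α := Int.fract_eq_self.2 ⟨h0.le, h1⟩

lemma floor_alpha : ⌊α⌋ = 0 := by
  rw [Int.floor_eq_zero_iff]; exact ⟨h0.le, h1⟩

lemma cf_key : ∀ s, α * ((cfQ α (s + 1) : ℝ) + (cfQ α s : ℝ) * cfGauss α (s + 1)) =
    (cfP α (s + 1) : ℝ) + (cfP α s : ℝ) * cfGauss α (s + 1) := by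
  intro s
  induction s with
  | zero =>
    have hfl := floor_alpha hirr h0 h1
    have hx0 := cfGauss_zero_eq hirr h0 h1
    have h := gauss_inv_eq (α := α) 0
    rw [hx0] at h
    have hp0 : cfP α 0 = 0 := by simp [cfP, cfPQ, hfl]
    have hp1 : cfP α 1 = 1 := by simp [cfP, cfPQ, hfl]
    have h2 : α * ((cfA α 1 : ℝ) + cfGauss α 1) = 1 := by
      rw [← h, mul_one_div_cancel h0.ne']
    rw [hp0, hp1, cfQ_one, cfQ_zero]
    push_cast
    linear_combination h2
  | succ s ih =>
    have hx := gauss_basic hirr h0 h1 (s + 1)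
    have h := gauss_inv_eq (α := α) (s + 1)
    have hd : cfGauss α (s + 1) * ((cfA α (s + 2) : ℝ) + cfGauss α (s + 2)) = 1 := by
      rw [← h, mul_one_div_cancel hx.2.1.ne']
    show α * ((cfQ α (s + 2) : ℝ) + (cfQ α (s + 1) : ℝ) * cfGauss α (s + 2)) =
      (cfP α (s + 2) : ℝ) + (cfP α (s + 1) : ℝ) * cfGauss α (s + 2)
    rw [cfQ_rec, cfP_rec]
    push_cast
    linear_combination ((cfA α (s + 2) : ℝ) + cfGauss α (s + 2)) * ih +
      ((cfP α s : ℝ) - α * (cfQ α s : ℝ)) * hd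

omit hirr h0 h1 in
lemma cf_det : ∀ s, cfP α (s + 1) * cfQ α s - cfP α s * cfQ α (s + 1) = (-1) ^ s := by
  intro s
  induction s with
  | zero => show (cfA α 1 * ⌊α⌋ + 1) * 1 - ⌊α⌋ * cfA α 1 = 1; ring
  | succ s ih =>
    rw [cfP_rec, cfQ_rec, pow_succ]
    linear_combination (-1 : ℤ) * ih

lemma cf_err (s : ℕ) :
    |α - (cfP α (s + 1) : ℝ) / (cfQ α (s + 1) : ℝ)| =
      cfGauss α (s + 1) /
        ((cfQ α (s + 1) : ℝ) * ((cfQ α (s + 1) : ℝ) + (cfQ α s : ℝ) * cfGauss α (s + 1))) := by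
  have hq1 : (0 : ℝ) < (cfQ α (s + 1) : ℝ) := by
    exact_mod_cast lt_of_lt_of_le zero_lt_one (cfQ_pos hirr h0 h1 (s + 1))
  have hq0 : (0 : ℝ) < (cfQ α s : ℝ) := by
    exact_mod_cast lt_of_lt_of_le zero_lt_one (cfQ_pos hirr h0 h1 s)
  obtain ⟨-, hxp, hxl⟩ := gauss_basic hirr h0 h1 (s + 1)
  have hD : (0 : ℝ) < (cfQ α (s + 1) : ℝ) + (cfQ α s : ℝ) * cfGauss α (s + 1) := by positivity
  have key := cf_key hirr h0 h1 s
  have hα : α - (cfP α (s + 1) : ℝ) / (cfQ α (s + 1) : ℝ) =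
      cfGauss α (s + 1) * ((cfP α s : ℝ) * (cfQ α (s + 1) : ℝ) - (cfP α (s + 1) : ℝ) * (cfQ α s : ℝ)) /
        ((cfQ α (s + 1) : ℝ) * ((cfQ α (s + 1) : ℝ) + (cfQ α s : ℝ) * cfGauss α (s + 1))) := by
    field_simp
    linear_combination ((cfQ α (s + 1) : ℝ)) * key
  have hdet : |((cfP α s : ℝ) * (cfQ α (s + 1) : ℝ) - (cfP α (s + 1) : ℝ) * (cfQ α s : ℝ))| = 1 := by
    have hd2 : (cfP α s) * (cfQ α (s + 1)) - (cfP α (s + 1)) * (cfQ α s) = -(-1 : ℤ) ^ s := by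
      linear_combination (-1 : ℤ) * cf_det (α := α) s
    have h3 := congrArg (fun z : ℤ => (z : ℝ)) hd2
    push_cast at h3
    rw [h3, abs_neg, abs_pow, abs_neg, abs_one, one_pow]
  rw [hα, abs_div, abs_mul, hdet, mul_one, abs_of_pos hxp, abs_of_pos (mul_pos hq1 hD)]

lemma cf_bounds (s : ℕ) :
    1 / ((cfQ α s : ℝ) * ((cfQ α s : ℝ) + (cfQ α (s + 1) : ℝ))) <
        |α - (cfP α s : ℝ) / (cfQ α s : ℝ)| ∧
      |α - (cfP α s : ℝ) / (cfQ α s : ℝ)| < 1 / ((cfQ α s : ℝ) * (cfQ α (s + 1) : ℝ)) := by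
  match s with
  | 0 =>
    have hfl := floor_alpha hirr h0 h1
    have hx0 := cfGauss_zero_eq hirr h0 h1
    have h := gauss_inv_eq (α := α) 0
    rw [hx0] at h
    obtain ⟨-, hxp, hxl⟩ := gauss_basic hirr h0 h1 1
    have ha : (1 : ℝ) ≤ (cfA α 1 : ℝ) := by exact_mod_cast cfA_pos hirr h0 h1 0
    have hp0 : cfP α 0 = 0 := by simp [cfP, cfPQ, hfl]
    rw [hp0, cfQ_zero, cfQ_one]
    push_cast
    rw [zero_div, sub_zero, abs_of_pos h0]
    have hinv : 1 / α = (cfA α 1 : ℝ) + cfGauss α 1 := h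
    constructor
    · rw [div_lt_iff₀ (by linarith), one_mul]
      have h2 : 1 / α < (cfA α 1 : ℝ) + 1 := by rw [hinv]; linarith
      rw [div_lt_iff₀ h0] at h2
      linarith
    · rw [lt_div_iff₀ (by linarith), one_mul]
      have h2 : (cfA α 1 : ℝ) < 1 / α := by rw [hinv]; linarith
      rw [lt_div_iff₀ h0] at h2
      linarith
  | s + 1 =>
    show 1 / ((cfQ α (s + 1) : ℝ) * ((cfQ α (s + 1) : ℝ) + (cfQ α (s + 2) : ℝ))) <
        |α - (cfP α (s + 1) : ℝ) / (cfQ α (s + 1) : ℝ)| ∧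
      |α - (cfP α (s + 1) : ℝ) / (cfQ α (s + 1) : ℝ)| <
        1 / ((cfQ α (s + 1) : ℝ) * (cfQ α (s + 2) : ℝ))
    have hq1 : (0 : ℝ) < (cfQ α (s + 1) : ℝ) := by
      exact_mod_cast lt_of_lt_of_le zero_lt_one (cfQ_pos hirr h0 h1 (s + 1))
    have hq0 : (0 : ℝ) < (cfQ α s : ℝ) := by
      exact_mod_cast lt_of_lt_of_le zero_lt_one (cfQ_pos hirr h0 h1 s)
    have hq2 : (0 : ℝ) < (cfQ α (s + 2) : ℝ) := by
      exact_mod_cast lt_of_lt_of_le zero_lt_one (cfQ_pos hirr h0 h1 (s + 2))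
    obtain ⟨-, hxp, hxl⟩ := gauss_basic hirr h0 h1 (s + 1)
    obtain ⟨-, hxp2, hxl2⟩ := gauss_basic hirr h0 h1 (s + 2)
    have h := gauss_inv_eq (α := α) (s + 1)
    have hd : cfGauss α (s + 1) * ((cfA α (s + 2) : ℝ) + cfGauss α (s + 2)) = 1 := by
      rw [← h, mul_one_div_cancel hxp.ne']
    have hrec : (cfQ α (s + 2) : ℝ) =
        (cfA α (s + 2) : ℝ) * (cfQ α (s + 1) : ℝ) + (cfQ α s : ℝ) := by
      rw [cfQ_rec]; push_cast; ring
    have hD : (0 : ℝ) < (cfQ α (s + 1) : ℝ) + (cfQ α s : ℝ) * cfGauss α (s + 1) :=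
      add_pos hq1 (mul_pos hq0 hxp)
    rw [cf_err hirr h0 h1 s, hrec]
    have hQQ : (0 : ℝ) < (cfQ α (s + 1) : ℝ) * (cfQ α (s + 1) : ℝ) := mul_pos hq1 hq1
    constructor
    · rw [div_lt_div_iff₀ (mul_pos hq1 (add_pos hq1 (hrec ▸ hq2))) (mul_pos hq1 hD), one_mul]
      have key2 : (cfQ α (s + 1) : ℝ) * (cfQ α (s + 1) : ℝ) *
            (cfGauss α (s + 1) * (1 + (cfA α (s + 2) : ℝ))) -
            (cfQ α (s + 1) : ℝ) * (cfQ α (s + 1) : ℝ) =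
          (cfQ α (s + 1) : ℝ) * (cfQ α (s + 1) : ℝ) *
            (cfGauss α (s + 1) * (1 - cfGauss α (s + 2))) := by
        linear_combination ((cfQ α (s + 1) : ℝ) * (cfQ α (s + 1) : ℝ)) * hd
      nlinarith [key2, mul_pos hQQ (mul_pos hxp (sub_pos.2 hxl2))]
    · rw [div_lt_div_iff₀ (mul_pos hq1 hD) (mul_pos hq1 (hrec ▸ hq2)), one_mul]
      have key3 : (cfQ α (s + 1) : ℝ) * (cfQ α (s + 1) : ℝ) -
            (cfQ α (s + 1) : ℝ) * (cfQ α (s + 1) : ℝ) *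
              (cfGauss α (s + 1) * (cfA α (s + 2) : ℝ)) =
          (cfQ α (s + 1) : ℝ) * (cfQ α (s + 1) : ℝ) *
            (cfGauss α (s + 1) * cfGauss α (s + 2)) := by
        linear_combination (-((cfQ α (s + 1) : ℝ) * (cfQ α (s + 1) : ℝ))) * hd
      nlinarith [key3, mul_pos hQQ (mul_pos hxp hxp2)]



lemma rat_gap (m n : ℕ) (hn : 0 < n) (s : ℕ)
    (hne : (m : ℝ) / n ≠ (cfP α s : ℝ) / (cfQ α s : ℝ)) :
    1 / ((n : ℝ) * (cfQ α s : ℝ)) ≤ |(m : ℝ) / n - (cfP α s : ℝ) / (cfQ α s : ℝ)| := by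
  have hq : (0 : ℝ) < (cfQ α s : ℝ) := by
    exact_mod_cast lt_of_lt_of_le zero_lt_one (cfQ_pos hirr h0 h1 s)
  have hn' : (0 : ℝ) < (n : ℝ) := by exact_mod_cast hn
  have hd : ((m : ℤ) * cfQ α s - cfP α s * n) ≠ 0 := by
    intro h
    apply hne
    have h' : ((m : ℤ) * cfQ α s : ℝ) = ((cfP α s * n : ℤ) : ℝ) := by
      exact_mod_cast congrArg (fun z : ℤ => (z : ℝ)) (sub_eq_zero.mp h)
    push_cast at h'
    rw [div_eq_div_iff hn'.ne' hq.ne']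
    linarith
  have h1 : (1 : ℝ) ≤ |(((m : ℤ) * cfQ α s - cfP α s * n : ℤ) : ℝ)| := by
    rw [← Int.cast_abs]
    exact_mod_cast Int.one_le_abs hd
  have heq : (m : ℝ) / n - (cfP α s : ℝ) / (cfQ α s : ℝ) =
      (((m : ℤ) * cfQ α s - cfP α s * n : ℤ) : ℝ) / ((n : ℝ) * (cfQ α s : ℝ)) := by
    push_cast
    field_simp
  rw [heq, abs_div, abs_of_pos (mul_pos hn' hq)]
  gcongr

lemma exists_index (n : ℕ) (hn : 1 ≤ n) :
    ∃ s, cfQ α s ≤ (n : ℤ) ∧ (n : ℤ) < cfQ α (s + 1) := by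
  have hP : ∃ s : ℕ, (n : ℤ) < cfQ α (s + 1) := by
    refine ⟨n + 1, ?_⟩
    have h := cfQ_grow hirr h0 h1 (n + 1)
    push_cast at h ⊢
    omega
  classical
  let s₀ := Nat.find hP
  have hs₀ := Nat.find_spec hP
  refine ⟨s₀, ?_, hs₀⟩
  match hm : s₀ with
  | 0 => rw [cfQ_zero]; exact_mod_cast hn
  | t + 1 =>
    have := Nat.find_min hP (by omega : t < s₀)
    show cfQ α (t + 1) ≤ (n : ℤ)
    omega

lemma approx_step {n m : ℕ} (hn : 2 ≤ n) (hm0 : 0 < m) (hmn : m < n)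
    (happ : |α - (m : ℝ) / n| < Real.exp (-(n : ℝ) ^ 3)) :
    ∃ s, cfQ α s ≤ (n : ℤ) ∧
      Real.exp ((n : ℝ) ^ 3) / (2 * (n : ℝ) ^ 2) ≤ (cfQ α (s + 1) : ℝ) := by
  obtain ⟨s, hs1, hs2⟩ := exists_index hirr h0 h1 n (by omega)
  refine ⟨s, hs1, ?_⟩
  obtain ⟨hlow, hup⟩ := cf_bounds hirr h0 h1 s
  have hq0 : (0 : ℝ) < (cfQ α s : ℝ) := by
    exact_mod_cast lt_of_lt_of_le zero_lt_one (cfQ_pos hirr h0 h1 s)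
  have hq1 : (0 : ℝ) < (cfQ α (s + 1) : ℝ) := by
    exact_mod_cast lt_of_lt_of_le zero_lt_one (cfQ_pos hirr h0 h1 (s + 1))
  have hn' : (2 : ℝ) ≤ (n : ℝ) := by exact_mod_cast hn
  have hQ0n : (cfQ α s : ℝ) ≤ (n : ℝ) := by exact_mod_cast hs1
  have hQ1n : (n : ℝ) + 1 ≤ (cfQ α (s + 1) : ℝ) := by exact_mod_cast hs2
  have hQ01 : (1 : ℝ) ≤ (cfQ α s : ℝ) := by
    exact_mod_cast cfQ_pos hirr h0 h1 s
  set Q0 := (cfQ α s : ℝ)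
  set Q1 := (cfQ α (s + 1) : ℝ)
  set E := Real.exp ((n : ℝ) ^ 3) with hE
  have hEpos : (0 : ℝ) < E := Real.exp_pos _
  have hexpneg : Real.exp (-(n : ℝ) ^ 3) = 1 / E := by
    rw [Real.exp_neg, one_div]
  have hE2 : 2 * (n : ℝ) ^ 2 ≤ E := by
    have h3 := Real.add_one_le_exp ((n : ℝ) ^ 3)
    nlinarith
  rw [div_le_iff₀ (by positivity)]
  by_cases hc : (m : ℝ) / n = (cfP α s : ℝ) / Q0
  · -- approximated rational is the convergent itself
    have hlow' : 1 / (Q0 * (Q0 + Q1)) < 1 / E := by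
      rw [← hexpneg]
      calc 1 / (Q0 * (Q0 + Q1)) < |α - (cfP α s : ℝ) / Q0| := hlow
        _ = |α - (m : ℝ) / n| := by rw [hc]
        _ < _ := happ
    have hEQ : E < Q0 * (Q0 + Q1) :=
      lt_of_one_div_lt_one_div (mul_pos hq0 (add_pos hq0 hq1)) hlow'
    have hEQ' : E < Q0 * Q0 + Q0 * Q1 := by linarith [mul_add Q0 Q0 Q1, hEQ]
    have ha : Q0 * Q0 ≤ (n : ℝ) * n := mul_le_mul hQ0n hQ0n (by linarith) (by linarith)
    have hb : Q0 * Q1 ≤ (n : ℝ) * Q1 := mul_le_mul_of_nonneg_right hQ0n hq1.le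
    have hd2 : 2 * ((n : ℝ) * Q1) ≤ 2 * (n : ℝ) ^ 2 * Q1 := by
      have h9 : 0 ≤ ((n : ℝ) - 1) * ((n : ℝ) * Q1) :=
        mul_nonneg (by linarith) (mul_nonneg (by linarith) hq1.le)
      nlinarith [h9]
    linarith
  · -- distinct rationals
    have hgap := rat_gap hirr h0 h1 m n (by omega) s hc
    have htri : |(m : ℝ) / n - (cfP α s : ℝ) / Q0| ≤
        |α - (cfP α s : ℝ) / Q0| + |α - (m : ℝ) / n| := by
      have := abs_sub_abs_le_abs_sub ((m : ℝ) / n) ((cfP α s : ℝ) / Q0)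
      calc |(m : ℝ) / n - (cfP α s : ℝ) / Q0|
          = |(α - (cfP α s : ℝ) / Q0) - (α - (m : ℝ) / n)| := by ring_nf
        _ ≤ _ := abs_sub _ _
    have h5 : 1 / ((n : ℝ) * Q0) < 1 / (Q0 * Q1) + 1 / E := by
      calc 1 / ((n : ℝ) * Q0) ≤ |(m : ℝ) / n - (cfP α s : ℝ) / Q0| := hgap
        _ ≤ |α - (cfP α s : ℝ) / Q0| + |α - (m : ℝ) / n| := htri
        _ < 1 / (Q0 * Q1) + 1 / E := by
            rw [← hexpneg]
            exact add_lt_add hup happ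
    have h6 : 1 / ((n : ℝ) ^ 2 * Q1) ≤ 1 / ((n : ℝ) * Q0) - 1 / (Q0 * Q1) := by
      have heq2 : 1 / ((n : ℝ) * Q0) - 1 / (Q0 * Q1) = (Q1 - n) / ((n : ℝ) * Q0 * Q1) := by
        field_simp
      rw [heq2, div_le_div_iff₀ (by positivity) (by positivity)]
      have h9a : 0 ≤ (n : ℝ) ^ 2 * Q1 * (Q1 - n - 1) :=
        mul_nonneg (mul_nonneg (by positivity) hq1.le) (by linarith)
      have h9b : 0 ≤ (n : ℝ) * Q1 * ((n : ℝ) - Q0) :=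
        mul_nonneg (mul_nonneg (by linarith) hq1.le) (by linarith)
      nlinarith [h9a, h9b]
    have h7 : 1 / ((n : ℝ) ^ 2 * Q1) < 1 / E := by linarith
    have h8 : E < (n : ℝ) ^ 2 * Q1 :=
      lt_of_one_div_lt_one_div (mul_pos (by positivity) hq1) h7
    have h9 : (0 : ℝ) < (n : ℝ) ^ 2 * Q1 := mul_pos (by positivity) hq1
    linarith

set_option maxHeartbeats 2000000 in
lemma limsup_top
    (happ : ∀ N : ℕ, ∃ n, N + 2 ≤ n ∧ ∃ m, 0 < m ∧ m < n ∧
      |α - (m : ℝ) / n| < Real.exp (-(n : ℝ) ^ 3)) :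
    Filter.atTop.limsup (fun s : ℕ =>
      ((Real.log (cfQ α (s + 1)) /
        ((cfQ α s : ℝ) ^ 2 * Real.log (cfQ α s)) : ℝ) : EReal)) = ⊤ := by
  rw [EReal.eq_top_iff_forall_lt]
  intro y
  have key : ∀ M : ℝ, 1 ≤ M → ∃ᶠ s in Filter.atTop,
      (M : EReal) ≤ ((Real.log (cfQ α (s + 1)) /
        ((cfQ α s : ℝ) ^ 2 * Real.log (cfQ α s)) : ℝ) : EReal) := by
    intro M hM
    rw [Filter.frequently_atTop]
    intro S₀
    set T := max S₀ 2 with hT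
    obtain ⟨N, hN⟩ := exists_nat_gt (16 * M ^ 2 + Real.log (cfQ α (T + 1)))
    obtain ⟨n, hnN, m, hm0, hmn, hmapp⟩ := happ N
    have hn2 : 2 ≤ n := by omega
    have hnR : (2 : ℝ) ≤ (n : ℝ) := by exact_mod_cast hn2
    have hNn : (N : ℝ) ≤ (n : ℝ) := by exact_mod_cast (by omega : N ≤ n)
    have hlogq_nonneg : 0 ≤ Real.log (cfQ α (T + 1)) := by
      apply Real.log_nonneg
      exact_mod_cast cfQ_pos hirr h0 h1 (T + 1)
    have hM2 : (0 : ℝ) ≤ 16 * M ^ 2 := by positivity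
    have hnn : 16 * M ^ 2 ≤ (n : ℝ) := by linarith
    have hnlog : Real.log (cfQ α (T + 1)) < (n : ℝ) := by linarith
    obtain ⟨s, hs1, hs2⟩ := approx_step hirr h0 h1 hn2 hm0 hmn hmapp
    have hq1R : (0 : ℝ) < (cfQ α (s + 1) : ℝ) := by
      exact_mod_cast lt_of_lt_of_le zero_lt_one (cfQ_pos hirr h0 h1 (s + 1))
    have hlog1 : (n : ℝ) ^ 3 - Real.log (2 * (n : ℝ) ^ 2) ≤ Real.log (cfQ α (s + 1)) := by
      calc (n : ℝ) ^ 3 - Real.log (2 * (n : ℝ) ^ 2)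
          = Real.log (Real.exp ((n : ℝ) ^ 3) / (2 * (n : ℝ) ^ 2)) := by
            rw [Real.log_div (Real.exp_ne_zero _) (by positivity), Real.log_exp]
        _ ≤ _ := Real.log_le_log (by positivity) hs2
    have hsplit : Real.log (2 * (n : ℝ) ^ 2) = Real.log 2 + 2 * Real.log n := by
      rw [Real.log_mul two_ne_zero (by positivity), Real.log_pow]
      push_cast; ring
    have hlog2 : Real.log 2 ≤ 1 := by
      linarith [Real.log_le_sub_one_of_pos (show (0 : ℝ) < 2 by norm_num)]
    have hlognn : Real.log n ≤ (n : ℝ) - 1 :=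
      Real.log_le_sub_one_of_pos (by linarith)
    have hlog2n : Real.log (2 * (n : ℝ) ^ 2) ≤ 2 * (n : ℝ) - 1 := by
      rw [hsplit]; linarith
    have hcube : 0 ≤ (n : ℝ) * ((n : ℝ) - 2) * ((n : ℝ) + 2) :=
      mul_nonneg (mul_nonneg (by linarith) (by linarith)) (by linarith)
    have hhalf : (n : ℝ) ^ 3 / 2 ≤ (n : ℝ) ^ 3 - Real.log (2 * (n : ℝ) ^ 2) := by
      nlinarith [hcube, hnR]
    have hn3 : (n : ℝ) ≤ (n : ℝ) ^ 3 / 2 := by nlinarith [hnR]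
    -- the index s is large
    have hsT : T + 1 ≤ s := by
      by_contra hcon
      push_neg at hcon
      have hmono : cfQ α (s + 1) ≤ cfQ α (T + 1) := cfQ_mono hirr h0 h1 (by omega)
      have hmonoR : (cfQ α (s + 1) : ℝ) ≤ (cfQ α (T + 1) : ℝ) := by exact_mod_cast hmono
      have hTq : (0 : ℝ) < (cfQ α (T + 1) : ℝ) := by
        exact_mod_cast lt_of_lt_of_le zero_lt_one (cfQ_pos hirr h0 h1 (T + 1))
      have := Real.log_le_log hq1R hmonoR
      linarith
    refine ⟨s, by omega, ?_⟩
    rw [EReal.coe_le_coe_iff]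
    -- denominator bounds
    have hs2le : 2 ≤ s := by omega
    have hQ02 : (2 : ℝ) ≤ (cfQ α s : ℝ) := by
      exact_mod_cast cfQ_two_le hirr h0 h1 s hs2le
    have hQ0n : (cfQ α s : ℝ) ≤ (n : ℝ) := by exact_mod_cast hs1
    have hL0pos : 0 < Real.log (cfQ α s) := Real.log_pos (by linarith)
    have hL0le : Real.log (cfQ α s) ≤ Real.log n :=
      Real.log_le_log (by linarith) hQ0n
    have hlognpos : 0 < Real.log n := Real.log_pos (by linarith)
    have hdenpos : 0 < (cfQ α s : ℝ) ^ 2 * Real.log (cfQ α s) := by positivity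
    rw [le_div_iff₀ hdenpos]
    have hden : (cfQ α s : ℝ) ^ 2 * Real.log (cfQ α s) ≤ (n : ℝ) ^ 2 * Real.log n := by
      apply mul_le_mul _ hL0le hL0pos.le (by positivity)
      nlinarith
    -- sqrt estimates
    have hsq : Real.sqrt n * Real.sqrt n = (n : ℝ) := Real.mul_self_sqrt (by positivity)
    have hsqrtpos : 0 < Real.sqrt n := Real.sqrt_pos.2 (by linarith)
    have hlogsqrt : Real.log n = 2 * Real.log (Real.sqrt n) := by
      rw [Real.log_sqrt (by positivity)]; ring
    have hlogn2 : Real.log n ≤ 2 * Real.sqrt n := by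
      have := Real.log_le_sub_one_of_pos hsqrtpos
      rw [hlogsqrt]; linarith
    have hsqrtM : 4 * M ≤ Real.sqrt n :=
      (Real.le_sqrt (by positivity) (by positivity)).2 (by nlinarith)
    have hMlogn : M * Real.log n ≤ (n : ℝ) / 2 := by
      have h1' : M * Real.log n ≤ M * (2 * Real.sqrt n) :=
        mul_le_mul_of_nonneg_left hlogn2 (by linarith)
      nlinarith [mul_nonneg hsqrtpos.le (sub_nonneg.2 hsqrtM), hsq]
    have hfin : M * ((n : ℝ) ^ 2 * Real.log n) ≤ (n : ℝ) ^ 3 / 2 := by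
      have h2' := mul_le_mul_of_nonneg_left hMlogn (show (0 : ℝ) ≤ (n : ℝ) ^ 2 by positivity)
      nlinarith [h2']
    have h3' : M * ((cfQ α s : ℝ) ^ 2 * Real.log (cfQ α s)) ≤ M * ((n : ℝ) ^ 2 * Real.log n) :=
      mul_le_mul_of_nonneg_left hden (by linarith)
    linarith
  have h1le : (1 : ℝ) ≤ max y 0 + 1 := by
    have := le_max_right y 0; linarith
  have hfreq := key (max y 0 + 1) h1le
  have hle := Filter.le_limsup_of_frequently_le' hfreq
  refine lt_of_lt_of_le ?_ hle
  have : y < max y 0 + 1 := by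
    have := le_max_left y 0; linarith
  exact_mod_cast this

end CF

/-! ### Topological construction -/

/-- Union of tiny intervals around rationals `m/n` with `0 < m < n`. -/
def Aset (n : ℕ) : Set ℝ :=
  ⋃ m ∈ Finset.Ioo 0 n,
    Set.Ioo ((m : ℝ) / n - Real.exp (-(n : ℝ) ^ 3)) ((m : ℝ) / n + Real.exp (-(n : ℝ) ^ 3))

/-- Open dense sets used for the `Gδ` construction. -/
def Uset (N : ℕ) : Set ℝ :=
  (⋃ n ∈ {k : ℕ | N + 2 ≤ k}, Aset n) ∪ (Set.Icc (0 : ℝ) 1)ᶜ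

lemma Uopen (N : ℕ) : IsOpen (Uset N) := by
  apply IsOpen.union
  · exact isOpen_biUnion fun n _ => isOpen_biUnion fun m _ => isOpen_Ioo
  · exact isClosed_Icc.isOpen_compl

lemma Udense (N : ℕ) : Dense (Uset N) := by
  rw [dense_iff_inter_open]
  rintro o ho ⟨x, hx⟩
  rcases lt_or_ge x 0 with hneg | h0x
  · refine ⟨x, hx, Or.inr ?_⟩
    simp only [Set.mem_compl_iff, Set.mem_Icc, not_and, not_le]
    intro h'; linarith
  rcases lt_or_ge 1 x with hbig | hx1
  · refine ⟨x, hx, Or.inr ?_⟩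
    simp only [Set.mem_compl_iff, Set.mem_Icc, not_and, not_le]
    intro h'; linarith
  -- now 0 ≤ x ≤ 1
  obtain ⟨ε, hε, hball⟩ := Metric.isOpen_iff.1 ho x hx
  obtain ⟨k, hk⟩ := exists_nat_gt (2 / ε)
  set n := max (N + 2) k with hn
  have hnN : N + 2 ≤ n := le_max_left _ _
  have hkn : k ≤ n := le_max_right _ _
  have hn2 : 2 ≤ n := by omega
  have hnR : (2 : ℝ) ≤ (n : ℝ) := by exact_mod_cast hn2
  have hnpos : (0 : ℝ) < (n : ℝ) := by linarith
  have h2n : 2 / (n : ℝ) < ε := by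
    rw [div_lt_iff₀ hnpos]
    have hkR : (k : ℝ) ≤ (n : ℝ) := by exact_mod_cast hkn
    rw [div_lt_iff₀ hε] at hk
    calc (2 : ℝ) < k * ε := hk
      _ ≤ ε * n := by nlinarith

  have key : ∃ m : ℕ, 0 < m ∧ m < n ∧ |x - (m : ℝ) / n| ≤ 1 / n := by
    rcases le_or_gt (x * n) 1 with hc1 | hc1
    · refine ⟨1, one_pos, by omega, ?_⟩
      have hxn : x ≤ 1 / (n : ℝ) := by
        rw [le_div_iff₀ hnpos]; linarith
      rw [abs_le]
      push_cast
      constructor <;> [linarith [one_div_pos.2 hnpos]; linarith [one_div_pos.2 hnpos]]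
    rcases le_or_gt ((n : ℝ) - 1) (x * n) with hc2 | hc2
    · refine ⟨n - 1, by omega, by omega, ?_⟩
      have hcast : ((n - 1 : ℕ) : ℝ) = (n : ℝ) - 1 := by
        push_cast [Nat.cast_sub (by omega : 1 ≤ n)]; ring
      rw [hcast, abs_le]
      have hlow : ((n : ℝ) - 1) / n ≤ x := by
        rw [div_le_iff₀ hnpos]; linarith
      have hup : x - ((n : ℝ) - 1) / n ≤ 1 / n := by
        rw [sub_le_iff_le_add, ← add_div]
        have : ((n : ℝ) - 1 + 1) / n = 1 := by field_simp; ring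
        rw [show (1 : ℝ) + ((n:ℝ) - 1) = (n:ℝ) - 1 + 1 by ring, this]
        exact hx1
      constructor
      · have := one_div_pos.2 hnpos; linarith
      · exact hup
    · -- interior case
      have hfl1 : (1 : ℤ) ≤ ⌊x * n⌋ := by
        rw [Int.le_floor]; push_cast; linarith
      have hfln : ⌊x * n⌋ < (n : ℤ) := by
        rw [Int.floor_lt]; push_cast; linarith
      refine ⟨⌊x * n⌋.toNat, by omega, by omega, ?_⟩
      have hcast : ((⌊x * n⌋.toNat : ℕ) : ℝ) = ((⌊x * n⌋ : ℤ) : ℝ) := by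
        exact_mod_cast Int.toNat_of_nonneg (by omega)
      rw [hcast, abs_le]
      have hle := Int.floor_le (x * n)
      have hlt := Int.lt_floor_add_one (x * n)
      constructor
      · have hfl : ((⌊x * n⌋ : ℤ) : ℝ) / n ≤ x := by rw [div_le_iff₀ hnpos]; linarith
        have hpos := one_div_pos.2 hnpos
        linarith
      · rw [sub_le_iff_le_add, ← add_div, le_div_iff₀ hnpos]
        push_cast
        linarith
  obtain ⟨m, hm0, hmn, hmx⟩ := key
  refine ⟨(m : ℝ) / n, hball ?_, Or.inl ?_⟩
  · rw [Metric.mem_ball, Real.dist_eq, abs_sub_comm]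
    have := one_div_pos.2 hnpos
    calc |x - (m : ℝ) / n| ≤ 1 / n := hmx
      _ < 2 / n := by rw [div_lt_div_iff₀ hnpos hnpos]; nlinarith
      _ < ε := h2n
  · rw [Set.mem_iUnion₂]
    refine ⟨n, hnN, ?_⟩
    unfold Aset
    rw [Set.mem_iUnion₂]
    refine ⟨m, Finset.mem_Ioo.2 ⟨hm0, hmn⟩, ?_⟩
    constructor <;> [linarith [Real.exp_pos (-(n:ℝ)^3)]; linarith [Real.exp_pos (-(n:ℝ)^3)]]

theorem S_contains_dense_Gdelta :
    ∃ G : Set ℝ,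
      G ⊆ {α : ℝ | α ∈ Set.Ioo (0 : ℝ) 1 ∧ Irrational α ∧
        Filter.atTop.limsup (fun s : ℕ =>
          ((Real.log (cfQ α (s + 1)) /
            ((cfQ α s : ℝ) ^ 2 * Real.log (cfQ α s)) : ℝ) : EReal)) = ⊤} ∧
      IsGδ G ∧ Set.Ioo (0 : ℝ) 1 ⊆ closure G ∧
      ¬ ({α : ℝ | α ∈ Set.Ioo (0 : ℝ) 1 ∧ Irrational α ∧
        Filter.atTop.limsup (fun s : ℕ =>
          ((Real.log (cfQ α (s + 1)) /
            ((cfQ α s : ℝ) ^ 2 * Real.log (cfQ α s)) : ℝ) : EReal)) = ⊤} : Set ℝ).Countable := by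
  classical
  set G' : Set ℝ := {x : ℝ | Irrational x} ∩ ⋂ N, Uset N with hG'def
  have hUgδ : IsGδ (⋂ N, Uset N) := IsGδ.iInter fun N => (Uopen N).isGδ
  have hG'gδ : IsGδ G' := IsGδ.inter IsGδ.setOf_irrational hUgδ
  have hG'dense : Dense G' :=
    Dense.inter_of_Gδ IsGδ.setOf_irrational hUgδ dense_irrational
      (dense_iInter_of_isOpen Uopen Udense)
  set G : Set ℝ := G' ∩ Set.Ioo 0 1 with hGdef
  have hsub : G ⊆ {α : ℝ | α ∈ Set.Ioo (0 : ℝ) 1 ∧ Irrational α ∧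
      Filter.atTop.limsup (fun s : ℕ =>
        ((Real.log (cfQ α (s + 1)) /
          ((cfQ α s : ℝ) ^ 2 * Real.log (cfQ α s)) : ℝ) : EReal)) = ⊤} := by
    rintro β ⟨⟨hbirr, hbU⟩, hbIoo⟩
    refine ⟨hbIoo, hbirr, ?_⟩
    apply limsup_top hbirr hbIoo.1 hbIoo.2
    intro N
    have hmem : β ∈ Uset N := Set.mem_iInter.1 hbU N
    rcases hmem with hmem | hmem
    · rw [Set.mem_iUnion₂] at hmem
      obtain ⟨n, hn, hmem2⟩ := hmem
      unfold Aset at hmem2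
      rw [Set.mem_iUnion₂] at hmem2
      obtain ⟨m, hm, hIoo⟩ := hmem2
      rw [Finset.mem_Ioo] at hm
      refine ⟨n, hn, m, hm.1, hm.2, ?_⟩
      rw [abs_lt]
      exact ⟨by linarith [hIoo.1], by linarith [hIoo.2]⟩
    · exfalso
      exact hmem ⟨hbIoo.1.le, hbIoo.2.le⟩
  refine ⟨G, hsub, hG'gδ.inter isOpen_Ioo.isGδ, ?_, ?_⟩
  · -- density in (0,1)
    intro x hx
    rw [mem_closure_iff]
    intro o ho hxo
    obtain ⟨y, hyG', hyo⟩ :=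
      hG'dense.exists_mem_open (ho.inter isOpen_Ioo) ⟨x, hxo, hx⟩
    exact ⟨y, hyo.1, hyG', hyo.2⟩
  · -- uncountability
    intro hcount
    have hGcount : G.Countable := hcount.mono hsub
    obtain ⟨e, he⟩ := Set.countable_iff_exists_subset_range.1 hGcount
    have hDgδ : IsGδ (⋂ i : ℕ, ({e i}ᶜ : Set ℝ)) :=
      IsGδ.iInter fun i => isOpen_compl_singleton.isGδ
    have hD : Dense (⋂ i : ℕ, ({e i}ᶜ : Set ℝ)) :=
      dense_iInter_of_isOpen (fun i => isOpen_compl_singleton)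
        (fun i => dense_compl_singleton _)
    have hdense2 : Dense (G' ∩ ⋂ i : ℕ, ({e i}ᶜ : Set ℝ)) :=
      Dense.inter_of_Gδ hG'gδ hDgδ hG'dense hD
    obtain ⟨y, hy1, hy2⟩ := hdense2.exists_mem_open (isOpen_Ioo : IsOpen (Set.Ioo (0 : ℝ) 1))
      ⟨(1 : ℝ) / 2, by norm_num [Set.mem_Ioo]⟩
    have hyG : y ∈ G := ⟨hy1.1, hy2⟩
    obtain ⟨i, hi⟩ := he hyG
    exact (Set.mem_iInter.1 hy1.2 i) hi.symm
end
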